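/- arXiv:math/0504451 — 2 statements merged into one kernel-verified Lean document; each statement's English description precedes it below -/
import Mathlib

section
/- For every even integer k ≥ 2 and every real x, the improper oscillatory integral A_k(x) = lim_{ε→0+} ∫_{-∞}^{∞} exp(-ε s^k + i x s + i s^k) ds exists and satisfies |A_k(x)| ≤ 6. -/
open MeasureTheory Filter Set

namespace OscAux

noncomputable def hw (k : ℕ) (ε s : ℝ) : ℝ := Real.exp (-(ε * s ^ k))
noncomputable def dhw (k : ℕ) (ε s : ℝ) : ℝ := -(ε * (k * s ^ (k - 1))) * hw k ε s
noncomputable def dp (k : ℕ) (x s : ℝ) : ℝ := x + k * s ^ (k - 1)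
noncomputable def ddp (k : ℕ) (s : ℝ) : ℝ := (k : ℝ) * ((k - 1 : ℕ) * s ^ (k - 2))
noncomputable def pw (k : ℕ) (x ε s : ℝ) : ℝ := hw k ε s / dp k x s
noncomputable def dpw (k : ℕ) (x ε s : ℝ) : ℝ :=
  (dhw k ε s * dp k x s - hw k ε s * ddp k s) / dp k x s ^ 2
noncomputable def cF (k : ℕ) (x ε s : ℝ) : ℂ :=
  (hw k ε s : ℂ) * Complex.exp ((x * s + s ^ k : ℝ) * Complex.I)

variable {k : ℕ} {x ε s : ℝ}

lemma hasDerivAt_hw (k : ℕ) (ε s : ℝ) : HasDerivAt (hw k ε) (dhw k ε s) s := by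
  have h1 : HasDerivAt (fun s : ℝ => -(ε * s ^ k)) (-(ε * (k * s ^ (k - 1)))) s :=
    ((hasDerivAt_pow k s).const_mul ε).neg
  have := h1.exp
  change HasDerivAt (fun s => Real.exp (-(ε * s ^ k))) (dhw k ε s) s
  simpa [hw, dhw, mul_comm] using this

lemma hasDerivAt_dp (k : ℕ) (x s : ℝ) : HasDerivAt (dp k x) (ddp k s) s := by
  have h1 : HasDerivAt (fun s : ℝ => s ^ (k - 1)) ((k - 1 : ℕ) * s ^ (k - 1 - 1)) s :=
    hasDerivAt_pow (k - 1) s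
  have h2 := (h1.const_mul (k : ℝ)).const_add x
  have h3 : k - 1 - 1 = k - 2 := by omega
  rw [h3] at h2
  exact h2

lemma hasDerivAt_pw (hd : dp k x s ≠ 0) : HasDerivAt (pw k x ε) (dpw k x ε s) s :=
  (hasDerivAt_hw k ε s).div (hasDerivAt_dp k x s) hd

lemma hasDerivAt_phase (k : ℕ) (x s : ℝ) :
    HasDerivAt (fun s : ℝ => Complex.exp ((x * s + s ^ k : ℝ) * Complex.I))
      (Complex.exp ((x * s + s ^ k : ℝ) * Complex.I) * (dp k x s * Complex.I)) s := by
  have h1 : HasDerivAt (fun s : ℝ => x * s + s ^ k) (dp k x s) s := by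
    simpa [dp] using ((hasDerivAt_id s).const_mul x).fun_add (hasDerivAt_pow k s)
  exact (h1.ofReal_comp.mul_const Complex.I).cexp

lemma hw_pos : 0 < hw k ε s := Real.exp_pos _

lemma hw_le_one (hke : Even k) (hε : 0 ≤ ε) : hw k ε s ≤ 1 := by
  rw [hw, Real.exp_le_one_iff, neg_nonpos]
  exact mul_nonneg hε (hke.pow_nonneg s)

lemma hw_zero (k : ℕ) (s : ℝ) : hw k 0 s = 1 := by simp [hw]

lemma odd_km1 (hk : 2 ≤ k) (hke : Even k) : Odd (k - 1) :=
  Nat.Even.sub_odd (by omega) hke odd_one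

lemma dp_mono (hk : 2 ≤ k) (hke : Even k) : Monotone (dp k x) := by
  intro a b hab
  have := ((odd_km1 hk hke).strictMono_pow (R := ℝ)).monotone hab
  exact add_le_add_right (mul_le_mul_of_nonneg_left this (by positivity : (0:ℝ) ≤ k)) x

lemma dhw_nonpos (hε : 0 ≤ ε) (hke : Even k) (hk : 2 ≤ k) (hs : 0 ≤ s) : dhw k ε s ≤ 0 := by
  have h1 : 0 ≤ ε * (k * s ^ (k - 1)) := by positivity
  exact mul_nonpos_of_nonpos_of_nonneg (neg_nonpos.2 h1) (Real.exp_pos _).le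

lemma dhw_nonneg (hε : 0 ≤ ε) (hke : Even k) (hk : 2 ≤ k) (hs : s ≤ 0) : 0 ≤ dhw k ε s := by
  have h1 : s ^ (k - 1) ≤ 0 := (odd_km1 hk hke).pow_nonpos hs
  have h2 : ε * (k * s ^ (k - 1)) ≤ 0 :=
    mul_nonpos_of_nonneg_of_nonpos hε (mul_nonpos_of_nonneg_of_nonpos (by positivity) h1)
  exact mul_nonneg (neg_nonneg.2 h2) (Real.exp_pos _).le

lemma ddp_nonneg (hk : 2 ≤ k) (hke : Even k) : 0 ≤ ddp k s := by
  have h1 : Even (k - 2) := (Nat.even_sub hk).2 (by simp [hke])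
  exact mul_nonneg (by positivity) (mul_nonneg (by positivity) (h1.pow_nonneg s))

lemma dpw_nonpos_right (hε : 0 ≤ ε) (hk : 2 ≤ k) (hke : Even k) (hs : 0 ≤ s)
    (hd : 0 < dp k x s) : dpw k x ε s ≤ 0 := by
  apply div_nonpos_of_nonpos_of_nonneg _ (sq_nonneg _)
  have h1 := dhw_nonpos hε hke hk hs (ε := ε)
  have h2 := ddp_nonneg (s := s) hk hke
  have h3 : (0:ℝ) < hw k ε s := hw_pos
  nlinarith

lemma dpw_nonpos_left (hε : 0 ≤ ε) (hk : 2 ≤ k) (hke : Even k) (hs : s ≤ 0)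
    (hd : dp k x s < 0) : dpw k x ε s ≤ 0 := by
  apply div_nonpos_of_nonpos_of_nonneg _ (sq_nonneg _)
  have h1 := dhw_nonneg hε hke hk hs (ε := ε)
  have h2 := ddp_nonneg (s := s) hk hke
  have h3 : (0:ℝ) < hw k ε s := hw_pos
  nlinarith

lemma continuous_hw : Continuous (hw k ε) := by unfold hw; fun_prop

lemma continuous_cF : Continuous (cF k x ε) := by unfold cF hw; fun_prop

lemma continuousOn_dpw {A : Set ℝ} (hA : ∀ s ∈ A, dp k x s ≠ 0) :
    ContinuousOn (dpw k x ε) A := by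
  apply ContinuousOn.div
  · unfold dhw hw dp ddp; fun_prop
  · intro s hs; exact ((continuous_pow 2).comp (by unfold dp; fun_prop)).continuousOn s hs
  · intro s hs
    exact pow_ne_zero 2 (hA s hs)

lemma norm_cF (hke : Even k) (hε : 0 ≤ ε) : ‖cF k x ε s‖ ≤ 1 := by
  rw [cF, norm_mul, Complex.norm_real, Real.norm_eq_abs,
    Complex.norm_exp_ofReal_mul_I, mul_one, abs_of_pos (hw_pos (k := k) (ε := ε) (s := s))]
  exact hw_le_one hke hε

variable {a b : ℝ}

lemma norm_inner (s : ℝ) :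
    ‖(dpw k x ε s : ℂ) * (-Complex.I * Complex.exp ((x * s + s ^ k : ℝ) * Complex.I))‖
      = |dpw k x ε s| := by
  simp [Complex.norm_exp, Complex.norm_real, ← Complex.ofReal_pow]

lemma ibp_bound (ε : ℝ) (hab : a ≤ b) (hne : ∀ s ∈ Icc a b, dp k x s ≠ 0) :
    ‖∫ s in a..b, cF k x ε s‖
      ≤ |pw k x ε a| + |pw k x ε b| + ∫ s in a..b, |dpw k x ε s| := by
  have huicc : uIcc a b = Icc a b := uIcc_of_le hab
  set u : ℝ → ℂ := fun s => (pw k x ε s : ℂ) with hu_def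
  set u' : ℝ → ℂ := fun s => (dpw k x ε s : ℂ) with hu'_def
  set v : ℝ → ℂ := fun s => -Complex.I * Complex.exp ((x * s + s ^ k : ℝ) * Complex.I) with hv_def
  set v' : ℝ → ℂ := fun s => (dp k x s : ℂ) * Complex.exp ((x * s + s ^ k : ℝ) * Complex.I)
    with hv'_def
  have hu : ∀ s ∈ uIcc a b, HasDerivAt u (u' s) s := by
    intro s hs
    exact (hasDerivAt_pw (hne s (huicc ▸ hs))).ofReal_comp
  have hv : ∀ s ∈ uIcc a b, HasDerivAt v (v' s) s := by
    intro s _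
    have h := (hasDerivAt_phase k x s).const_mul (-Complex.I)
    refine h.congr_deriv (Eq.symm ?_)
    rw [hv'_def]
    have hI : Complex.I * Complex.I = -1 := Complex.I_mul_I
    set E := Complex.exp ((x * s + s ^ k : ℝ) * Complex.I)
    linear_combination ((E : ℂ) * (dp k x s)) * hI
  have hcont_u' : IntervalIntegrable u' volume a b := by
    apply ContinuousOn.intervalIntegrable
    rw [huicc]
    exact Complex.continuous_ofReal.comp_continuousOn (continuousOn_dpw hne)
  have hcont_v' : IntervalIntegrable v' volume a b := by
    apply Continuous.intervalIntegrable
    rw [hv'_def]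
    unfold dp
    fun_prop
  have key := intervalIntegral.integral_mul_deriv_eq_deriv_mul hu hv hcont_u' hcont_v'
  have hcongr : ∫ s in a..b, cF k x ε s = ∫ s in a..b, u s * v' s := by
    apply intervalIntegral.integral_congr
    intro s hs
    rw [huicc] at hs
    have hd := hne s hs
    show cF k x ε s = _
    have hd' : (dp k x s : ℂ) ≠ 0 := Complex.ofReal_ne_zero.mpr hd
    simp only [hu_def, hv'_def, cF, pw]
    push_cast
    field_simp
  rw [hcongr, key]
  have hnv : ∀ s, ‖v s‖ = 1 := by
    intro s
    rw [hv_def]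
    simp [Complex.norm_exp, ← Complex.ofReal_pow]
  have hnu : ∀ s, ‖u s‖ = |pw k x ε s| := by
    intro s; rw [hu_def]; exact Complex.norm_real _
  have h1 : ‖∫ s in a..b, u' s * v s‖ ≤ ∫ s in a..b, |dpw k x ε s| := by
    refine le_trans (intervalIntegral.norm_integral_le_integral_norm hab) ?_
    apply le_of_eq
    apply intervalIntegral.integral_congr
    intro s _
    exact norm_inner s
  calc ‖u b * v b - u a * v a - ∫ s in a..b, u' s * v s‖
      ≤ ‖u b * v b - u a * v a‖ + ‖∫ s in a..b, u' s * v s‖ := norm_sub_le _ _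
    _ ≤ ‖u b * v b‖ + ‖u a * v a‖ + ‖∫ s in a..b, u' s * v s‖ := by
        gcongr; exact norm_sub_le _ _
    _ ≤ |pw k x ε a| + |pw k x ε b| + ∫ s in a..b, |dpw k x ε s| := by
        have e1 : ‖u b * v b‖ = |pw k x ε b| := by rw [norm_mul, hnv b, hnu b, mul_one]
        have e2 : ‖u a * v a‖ = |pw k x ε a| := by rw [norm_mul, hnv a, hnu a, mul_one]
        rw [e1, e2]
        linarith [h1]

lemma integral_dpw (ε : ℝ) (hab : a ≤ b) (hne : ∀ s ∈ Icc a b, dp k x s ≠ 0) :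
    ∫ s in a..b, dpw k x ε s = pw k x ε b - pw k x ε a := by
  apply intervalIntegral.integral_eq_sub_of_hasDerivAt
  · intro s hs
    exact hasDerivAt_pw (hne s ((uIcc_of_le hab) ▸ hs))
  · apply ContinuousOn.intervalIntegrable
    rw [uIcc_of_le hab]
    exact continuousOn_dpw hne


lemma tail_right (hε : 0 ≤ ε) (hk : 2 ≤ k) (hke : Even k) (ha : 0 ≤ a) (hab : a ≤ b)
    (hpa : 0 < dp k x a) : ‖∫ s in a..b, cF k x ε s‖ ≤ 2 / dp k x a := by
  have hdp : ∀ s ∈ Icc a b, 0 < dp k x s := fun s hs => hpa.trans_le (dp_mono hk hke hs.1)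
  have hne : ∀ s ∈ Icc a b, dp k x s ≠ 0 := fun s hs => (hdp s hs).ne'
  have hbnd := ibp_bound (x := x) ε hab hne
  have habs : ∫ s in a..b, |dpw k x ε s| = pw k x ε a - pw k x ε b := by
    have : ∫ s in a..b, |dpw k x ε s| = ∫ s in a..b, -dpw k x ε s := by
      apply intervalIntegral.integral_congr
      intro s hs
      rw [uIcc_of_le hab] at hs
      exact abs_of_nonpos (dpw_nonpos_right hε hk hke (ha.trans hs.1) (hdp s hs))
    rw [this, intervalIntegral.integral_neg, integral_dpw ε hab hne]
    ring
  have hpwa : 0 ≤ pw k x ε a := div_nonneg hw_pos.le hpa.le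
  have hpwb : 0 ≤ pw k x ε b := div_nonneg hw_pos.le (hdp b ⟨hab, le_refl b⟩).le
  have hpa1 : pw k x ε a ≤ 1 / dp k x a := by
    rw [pw]
    gcongr
    exact hw_le_one hke hε
  rw [abs_of_nonneg hpwa, abs_of_nonneg hpwb, habs] at hbnd
  have : (2:ℝ) / dp k x a = 2 * (1 / dp k x a) := by ring
  rw [this]
  linarith

lemma tail_left (hε : 0 ≤ ε) (hk : 2 ≤ k) (hke : Even k) (hb : b ≤ 0) (hab : a ≤ b)
    (hpb : dp k x b < 0) : ‖∫ s in a..b, cF k x ε s‖ ≤ 2 / (-dp k x b) := by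
  have hdp : ∀ s ∈ Icc a b, dp k x s < 0 := fun s hs => (dp_mono hk hke hs.2).trans_lt hpb
  have hne : ∀ s ∈ Icc a b, dp k x s ≠ 0 := fun s hs => (hdp s hs).ne
  have hbnd := ibp_bound (x := x) ε hab hne
  have habs : ∫ s in a..b, |dpw k x ε s| = pw k x ε a - pw k x ε b := by
    have : ∫ s in a..b, |dpw k x ε s| = ∫ s in a..b, -dpw k x ε s := by
      apply intervalIntegral.integral_congr
      intro s hs
      rw [uIcc_of_le hab] at hs
      exact abs_of_nonpos (dpw_nonpos_left hε hk hke (hs.2.trans hb) (hdp s hs))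
    rw [this, intervalIntegral.integral_neg, integral_dpw ε hab hne]
    ring
  have hpwa : pw k x ε a ≤ 0 :=
    div_nonpos_of_nonneg_of_nonpos hw_pos.le (hdp a ⟨le_refl a, hab⟩).le
  have hpwb : pw k x ε b ≤ 0 := div_nonpos_of_nonneg_of_nonpos hw_pos.le hpb.le
  have hpb1 : -pw k x ε b ≤ 1 / (-dp k x b) := by
    rw [pw, ← div_neg]
    gcongr
    · linarith
    · exact hw_le_one hke hε
  rw [abs_of_nonpos hpwa, abs_of_nonpos hpwb, habs] at hbnd
  have : (2:ℝ) / (-dp k x b) = 2 * (1 / (-dp k x b)) := by ring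
  rw [this]
  linarith

lemma mid_left (hε : 0 ≤ ε) (hk : 2 ≤ k) (hke : Even k) (hb : 0 ≤ b)
    (hpb : dp k x b < 0) : ‖∫ s in (0:ℝ)..b, cF k x ε s‖
      ≤ 1 / (-dp k x 0) + 3 / (-dp k x b) := by
  have hdp : ∀ s ∈ Icc (0:ℝ) b, dp k x s < 0 := fun s hs => (dp_mono hk hke hs.2).trans_lt hpb
  have hne : ∀ s ∈ Icc (0:ℝ) b, dp k x s ≠ 0 := fun s hs => (hdp s hs).ne
  have hp0 : dp k x 0 < 0 := hdp 0 ⟨le_refl 0, hb⟩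
  have hbnd := ibp_bound (x := x) ε hb hne
  -- pointwise majorant
  set M : ℝ → ℝ := fun s => (-dhw k ε s) * (1 / (-dp k x b)) + ddp k s / dp k x s ^ 2 with hM
  have key : ∀ s ∈ Icc (0:ℝ) b, |dpw k x ε s| ≤ M s := by
    intro s hs
    have hds : dp k x s < 0 := hdp s hs
    have hdsb : dp k x s ≤ dp k x b := dp_mono hk hke hs.2
    have hdh : dhw k ε s ≤ 0 := dhw_nonpos hε hke hk hs.1
    have hA : 0 ≤ dhw k ε s * dp k x s := by nlinarith
    have hB : 0 ≤ hw k ε s * ddp k s := mul_nonneg hw_pos.le (ddp_nonneg hk hke)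
    have hsq : 0 < dp k x s ^ 2 := by nlinarith
    have habs : |dhw k ε s * dp k x s - hw k ε s * ddp k s|
        ≤ dhw k ε s * dp k x s + hw k ε s * ddp k s := by
      rw [abs_sub_le_iff]
      constructor <;> linarith
    have step1 : |dpw k x ε s| ≤ (dhw k ε s * dp k x s + hw k ε s * ddp k s) / dp k x s ^ 2 := by
      rw [dpw, abs_div, abs_of_nonneg hsq.le]
      gcongr
    refine step1.trans ?_
    rw [add_div, hM]
    have e1 : dhw k ε s * dp k x s / dp k x s ^ 2 = (-dhw k ε s) * (1 / (-dp k x s)) := by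
      rw [pow_two, mul_div_mul_right _ _ hds.ne, mul_one_div, neg_div_neg_eq]
    have e2 : (-dhw k ε s) * (1 / (-dp k x s)) ≤ (-dhw k ε s) * (1 / (-dp k x b)) := by
      apply mul_le_mul_of_nonneg_left _ (by linarith)
      apply one_div_le_one_div_of_le (by linarith) (by linarith)
    have e3 : hw k ε s * ddp k s / dp k x s ^ 2 ≤ ddp k s / dp k x s ^ 2 := by
      apply div_le_div_of_nonneg_right _ hsq.le
      nlinarith [hw_le_one (k := k) (ε := ε) (s := s) hke hε,
        ddp_nonneg (k := k) (s := s) hk hke, hw_pos (k := k) (ε := ε) (s := s)]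
    dsimp only
    rw [e1] at *
    linarith
  -- integral of majorant
  have hint_dh : ∫ s in (0:ℝ)..b, -dhw k ε s = hw k ε 0 - hw k ε b := by
    rw [intervalIntegral.integral_neg]
    rw [intervalIntegral.integral_eq_sub_of_hasDerivAt
      (fun s _ => hasDerivAt_hw k ε s)
      (by apply Continuous.intervalIntegrable; unfold dhw hw; fun_prop)]
    ring
  have hint_dd : ∫ s in (0:ℝ)..b, ddp k s / dp k x s ^ 2
      = (-(dp k x b)⁻¹) - (-(dp k x 0)⁻¹) := by
    apply intervalIntegral.integral_eq_sub_of_hasDerivAt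
    · intro s hs
      rw [uIcc_of_le hb] at hs
      have h1 := ((hasDerivAt_dp k x s).inv (hne s hs)).neg
      refine h1.congr_deriv ?_
      ring
    · apply ContinuousOn.intervalIntegrable
      rw [uIcc_of_le hb]
      apply ContinuousOn.div
      · unfold ddp; fun_prop
      · exact ((continuous_pow 2).comp (by unfold dp; fun_prop)).continuousOn
      · intro s hs; exact pow_ne_zero 2 (hne s hs)
  have hMint : IntervalIntegrable M volume 0 b := by
    rw [hM]
    apply IntervalIntegrable.add
    · apply Continuous.intervalIntegrable
      unfold dhw hw; fun_prop
    · apply ContinuousOn.intervalIntegrable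
      rw [uIcc_of_le hb]
      apply ContinuousOn.div
      · unfold ddp; fun_prop
      · exact ((continuous_pow 2).comp (by unfold dp; fun_prop)).continuousOn
      · intro s hs; exact pow_ne_zero 2 (hne s hs)
  have hdpwint : IntervalIntegrable (fun s => |dpw k x ε s|) volume 0 b := by
    apply ContinuousOn.intervalIntegrable
    rw [uIcc_of_le hb]
    exact (continuousOn_dpw hne).abs
  have hMval : ∫ s in (0:ℝ)..b, M s ≤ 2 / (-dp k x b) := by
    rw [hM]
    rw [intervalIntegral.integral_add (by apply Continuous.intervalIntegrable; unfold dhw hw; fun_prop)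
      (by
        apply ContinuousOn.intervalIntegrable
        rw [uIcc_of_le hb]
        apply ContinuousOn.div
        · unfold ddp; fun_prop
        · exact ((continuous_pow 2).comp (by unfold dp; fun_prop)).continuousOn
        · intro s hs; exact pow_ne_zero 2 (hne s hs))]
    rw [intervalIntegral.integral_mul_const, hint_dh, hint_dd]
    have hb1 : 0 < -dp k x b := by linarith
    have hb0 : 0 < -dp k x 0 := by linarith
    have e4 : -(dp k x b)⁻¹ = 1 / (-dp k x b) := by rw [one_div, inv_neg]
    have e5 : -(dp k x 0)⁻¹ = 1 / (-dp k x 0) := by rw [one_div, inv_neg]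
    have h01 : hw k ε 0 = 1 := by simp [hw, zero_pow (by omega : k ≠ 0)]
    have hwb : 0 < hw k ε b := hw_pos
    have h1b : 0 < 1 / (-dp k x b) := by positivity
    have h0b : 0 < 1 / (-dp k x 0) := by positivity
    rw [e4, e5, h01]
    have : (1 - hw k ε b) * (1 / (-dp k x b)) ≤ 1 * (1 / (-dp k x b)) := by
      apply mul_le_mul_of_nonneg_right _ h1b.le
      linarith
    have e6 : (2:ℝ) / (-dp k x b) = 1 * (1 / (-dp k x b)) + 1 / (-dp k x b) := by ring
    rw [e6]
    linarith
  have hintabs : ∫ s in (0:ℝ)..b, |dpw k x ε s| ≤ 2 / (-dp k x b) := by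
    refine le_trans (intervalIntegral.integral_mono_on hb hdpwint hMint key) hMval
  have hpw0 : |pw k x ε 0| ≤ 1 / (-dp k x 0) := by
    rw [pw, abs_div, abs_of_neg hp0, abs_of_pos hw_pos]
    gcongr
    · linarith
    · exact hw_le_one hke hε
  have hpwb : |pw k x ε b| ≤ 1 / (-dp k x b) := by
    rw [pw, abs_div, abs_of_neg hpb, abs_of_pos hw_pos]
    gcongr
    · linarith
    · exact hw_le_one hke hε
  have e7 : (3:ℝ) / (-dp k x b) = 1 / (-dp k x b) + 2 / (-dp k x b) := by ring
  rw [e7]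
  linarith

noncomputable def s0 (k : ℕ) (x : ℝ) : ℝ := (-x / k) ^ (((k - 1 : ℕ) : ℝ))⁻¹

section S0

variable (hk : 2 ≤ k) (hke : Even k) (hx : x ≤ 0)
include hk hx

lemma s0_nonneg : 0 ≤ s0 k x := by
  apply Real.rpow_nonneg
  have : (0:ℝ) < k := by positivity
  apply div_nonneg (by linarith) this.le

lemma s0_pow : (k : ℝ) * s0 k x ^ (k - 1) = -x := by
  have hkpos : (0:ℝ) < k := by positivity
  have hbase : 0 ≤ -x / k := div_nonneg (by linarith) hkpos.le
  have hn : ((k - 1 : ℕ) : ℝ) ≠ 0 := by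
    have : 1 ≤ k - 1 := by omega
    positivity
  have : s0 k x ^ (k - 1) = -x / k := by
    rw [s0, ← Real.rpow_natCast ((-x / k) ^ (((k - 1 : ℕ) : ℝ))⁻¹) (k - 1),
      ← Real.rpow_mul hbase, inv_mul_cancel₀ hn, Real.rpow_one]
  rw [this]
  field_simp

lemma dp_s0 : dp k x (s0 k x) = 0 := by
  rw [dp, s0_pow hk hx]
  ring

include hke

lemma two_le_two_pow : (2:ℝ) ≤ 2 ^ (k - 1) := by
  calc (2:ℝ) = 2 ^ 1 := (pow_one 2).symm
    _ ≤ 2 ^ (k - 1) := pow_le_pow_right₀ one_le_two (by omega)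

lemma dp_right : 2 * (k:ℝ) ≤ dp k x (s0 k x + 2) := by
  have hS := s0_nonneg (x := x) hk hx
  have h1 : s0 k x ^ (k - 1) + 2 ^ (k - 1) ≤ (s0 k x + 2) ^ (k - 1) :=
    pow_add_pow_le hS (by norm_num) (by omega)
  have h2 := two_le_two_pow (x := x) hk hke hx
  have h3 := s0_pow hk hx
  have hkr : (2:ℝ) ≤ k := by exact_mod_cast hk
  rw [dp]
  nlinarith

lemma sub_pow_claim : 2 ≤ s0 k x ^ (k - 1) - (s0 k x - 2) ^ (k - 1) := by
  have hS := s0_nonneg (x := x) hk hx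
  have hodd : Odd (k - 1) := odd_km1 hk hke
  have hn1 : 1 ≤ k - 1 := by omega
  rcases le_or_gt (s0 k x) 3 with hc | hc
  · set t := s0 k x - 1 with ht
    have hb1 : (1:ℝ) + ↑(k-1) * t ≤ (1 + t) ^ (k - 1) :=
      one_add_mul_le_pow (by simp only [ht]; linarith) (k - 1)
    have hb2 : (1:ℝ) + ↑(k-1) * (-t) ≤ (1 + (-t)) ^ (k - 1) :=
      one_add_mul_le_pow (by simp only [ht]; linarith) (k - 1)
    have e1 : (1 + t) = s0 k x := by rw [ht]; ring
    have e2 : (1 + (-t)) = -(s0 k x - 2) := by rw [ht]; ring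
    rw [e1] at hb1
    rw [e2] at hb2
    rw [hodd.neg_pow] at hb2
    linarith
  · have h1 : (s0 k x - 2) ^ (k - 1) + 2 ^ (k - 1) ≤ (s0 k x) ^ (k - 1) := by
      have := pow_add_pow_le (x := s0 k x - 2) (y := (2:ℝ)) (by linarith) (by norm_num)
        (show k - 1 ≠ 0 by omega)
      calc (s0 k x - 2) ^ (k - 1) + 2 ^ (k - 1) ≤ (s0 k x - 2 + 2) ^ (k - 1) := this
        _ = (s0 k x) ^ (k - 1) := by ring_nf
    have h2 := two_le_two_pow (x := x) hk hke hx
    linarith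

lemma dp_left : dp k x (s0 k x - 2) ≤ -(2 * (k:ℝ)) := by
  have h1 := sub_pow_claim hk hke hx
  have h3 := s0_pow hk hx
  have hkr : (2:ℝ) ≤ k := by exact_mod_cast hk
  rw [dp]
  nlinarith

lemma dp_right_far (r : ℝ) (hr : 0 ≤ r) : r + 1 ≤ dp k x (s0 k x + 2 + r) := by
  have hS := s0_nonneg (x := x) hk hx
  have h1 : s0 k x ^ (k - 1) + (2 + r) ^ (k - 1) ≤ (s0 k x + (2 + r)) ^ (k - 1) :=
    pow_add_pow_le hS (by linarith) (by omega)
  have h2 : (2 + r : ℝ) ≤ (2 + r) ^ (k - 1) := le_self_pow₀ (by linarith) (by omega)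
  have h3 := s0_pow hk hx
  have hkr : (2:ℝ) ≤ k := by exact_mod_cast hk
  have e : s0 k x + 2 + r = s0 k x + (2 + r) := by ring
  rw [dp, e]
  nlinarith

lemma dp_left_far (r : ℝ) (hr : 0 ≤ r) : dp k x (-(s0 k x + 2 + r)) ≤ -(r + 1) := by
  have hS := s0_nonneg (x := x) hk hx
  have hodd : Odd (k - 1) := odd_km1 hk hke
  have h1 : (s0 k x + 2 + r) ^ (k - 1) ≥ 2 + r := by
    apply le_trans _ (le_self_pow₀ (by linarith) (show k - 1 ≠ 0 by omega))
    linarith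
  have h3 := s0_pow hk hx
  have hkr : (2:ℝ) ≤ k := by exact_mod_cast hk
  have hSpow : 0 ≤ s0 k x ^ (k - 1) := pow_nonneg hS _
  rw [dp, hodd.neg_pow]
  nlinarith

lemma main_bound (ε : ℝ) (hε : 0 ≤ ε) {c d : ℝ} (hc : c ≤ min 0 (s0 k x - 2))
    (hd : s0 k x + 2 ≤ d) : ‖∫ s in c..d, cF k x ε s‖ ≤ 6 := by
  have hS := s0_nonneg (x := x) hk hx
  have hkr : (2:ℝ) ≤ k := by exact_mod_cast hk
  have hdpl := dp_left hk hke hx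
  have hdpr := dp_right hk hke hx
  have hInt : ∀ u v : ℝ, IntervalIntegrable (cF k x ε) volume u v :=
    fun u v => continuous_cF.intervalIntegrable u v
  have hmid : ∀ u v : ℝ, u ≤ v → ‖∫ s in u..v, cF k x ε s‖ ≤ v - u := by
    intro u v huv
    have := intervalIntegral.norm_integral_le_of_norm_le_const
      (f := cF k x ε) (a := u) (b := v) (C := 1) (fun s _ => norm_cF hke hε)
    rw [one_mul, abs_of_nonneg (by linarith)] at this
    exact this
  have hright : ‖∫ s in (s0 k x + 2)..d, cF k x ε s‖ ≤ 1 / 2 := by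
    refine le_trans (tail_right hε hk hke (by linarith) hd (by linarith)) ?_
    rw [div_le_div_iff₀ (by linarith) (by norm_num)]
    linarith
  rcases le_or_gt (s0 k x) 2 with hcase | hcase
  · -- min 0 (s0 - 2) = s0 - 2
    have hmin : min 0 (s0 k x - 2) = s0 k x - 2 := min_eq_right (by linarith)
    rw [hmin] at hc
    have hleft : ‖∫ s in c..(s0 k x - 2), cF k x ε s‖ ≤ 1 / 2 := by
      refine le_trans (tail_left hε hk hke (by linarith) hc (by linarith)) ?_
      rw [div_le_div_iff₀ (by linarith) (by norm_num)]
      linarith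
    have hsplit : ∫ s in c..d, cF k x ε s
        = (∫ s in c..(s0 k x - 2), cF k x ε s) + (∫ s in (s0 k x - 2)..(s0 k x + 2), cF k x ε s)
          + ∫ s in (s0 k x + 2)..d, cF k x ε s := by
      rw [intervalIntegral.integral_add_adjacent_intervals (hInt _ _) (hInt _ _),
        intervalIntegral.integral_add_adjacent_intervals (hInt _ _) (hInt _ _)]
    rw [hsplit]
    have hm := hmid (s0 k x - 2) (s0 k x + 2) (by linarith)
    calc ‖_ + _ + _‖ ≤ ‖(∫ s in c..(s0 k x - 2), cF k x ε s)
          + (∫ s in (s0 k x - 2)..(s0 k x + 2), cF k x ε s)‖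
          + ‖∫ s in (s0 k x + 2)..d, cF k x ε s‖ := norm_add_le _ _
      _ ≤ ‖∫ s in c..(s0 k x - 2), cF k x ε s‖
          + ‖∫ s in (s0 k x - 2)..(s0 k x + 2), cF k x ε s‖
          + ‖∫ s in (s0 k x + 2)..d, cF k x ε s‖ := by gcongr; exact norm_add_le _ _
      _ ≤ 6 := by
          have : s0 k x + 2 - (s0 k x - 2) = 4 := by ring
          rw [this] at hm
          linarith
  · -- min 0 (s0 - 2) = 0
    have hmin : min 0 (s0 k x - 2) = 0 := min_eq_left (by linarith)
    rw [hmin] at hc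
    have hdp0 : dp k x 0 ≤ -(2 * (k:ℝ)) := by
      have := dp_mono (x := x) hk hke (show (0:ℝ) ≤ s0 k x - 2 by linarith)
      linarith
    have hleft : ‖∫ s in c..(0:ℝ), cF k x ε s‖ ≤ 1 / 2 := by
      refine le_trans (tail_left hε hk hke le_rfl hc (by linarith)) ?_
      rw [div_le_div_iff₀ (by linarith) (by norm_num)]
      linarith
    have hmidl : ‖∫ s in (0:ℝ)..(s0 k x - 2), cF k x ε s‖ ≤ 1 := by
      refine le_trans (mid_left hε hk hke (by linarith) (by linarith)) ?_
      have b1 : 1 / (-dp k x 0) ≤ 1 / 4 := by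
        rw [div_le_div_iff₀ (by linarith) (by norm_num)]
        linarith
      have b2 : 3 / (-dp k x (s0 k x - 2)) ≤ 3 / 4 := by
        rw [div_le_div_iff₀ (by linarith) (by norm_num)]
        linarith
      linarith
    have hsplit : ∫ s in c..d, cF k x ε s
        = (∫ s in c..(0:ℝ), cF k x ε s) + (∫ s in (0:ℝ)..(s0 k x - 2), cF k x ε s)
          + (∫ s in (s0 k x - 2)..(s0 k x + 2), cF k x ε s)
          + ∫ s in (s0 k x + 2)..d, cF k x ε s := by
      rw [intervalIntegral.integral_add_adjacent_intervals (hInt _ _) (hInt _ _),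
        intervalIntegral.integral_add_adjacent_intervals (hInt _ _) (hInt _ _),
        intervalIntegral.integral_add_adjacent_intervals (hInt _ _) (hInt _ _)]
    rw [hsplit]
    have hm := hmid (s0 k x - 2) (s0 k x + 2) (by linarith)
    calc ‖_ + _ + _ + _‖
        ≤ ‖(∫ s in c..(0:ℝ), cF k x ε s) + (∫ s in (0:ℝ)..(s0 k x - 2), cF k x ε s)
          + (∫ s in (s0 k x - 2)..(s0 k x + 2), cF k x ε s)‖
          + ‖∫ s in (s0 k x + 2)..d, cF k x ε s‖ := norm_add_le _ _
      _ ≤ ‖(∫ s in c..(0:ℝ), cF k x ε s) + (∫ s in (0:ℝ)..(s0 k x - 2), cF k x ε s)‖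
          + ‖∫ s in (s0 k x - 2)..(s0 k x + 2), cF k x ε s‖
          + ‖∫ s in (s0 k x + 2)..d, cF k x ε s‖ := by gcongr; exact norm_add_le _ _
      _ ≤ ‖∫ s in c..(0:ℝ), cF k x ε s‖ + ‖∫ s in (0:ℝ)..(s0 k x - 2), cF k x ε s‖
          + ‖∫ s in (s0 k x - 2)..(s0 k x + 2), cF k x ε s‖
          + ‖∫ s in (s0 k x + 2)..d, cF k x ε s‖ := by gcongr; exact norm_add_le _ _
      _ ≤ 6 := by
          have : s0 k x + 2 - (s0 k x - 2) = 4 := by ring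
          rw [this] at hm
          linarith

end S0

lemma norm_cF_eq : ‖cF k x ε s‖ = hw k ε s := by
  rw [cF, norm_mul, Complex.norm_real, Real.norm_eq_abs,
    Complex.norm_exp, abs_of_pos (hw_pos (k := k) (ε := ε) (s := s))]
  have : ((x * s + s ^ k : ℝ) * Complex.I).re = 0 := by simp [← Complex.ofReal_pow]
  rw [this, Real.exp_zero, mul_one]

lemma integrable_cF (hk : 2 ≤ k) (hke : Even k) (hε : 0 < ε) :
    Integrable (cF k x ε) := by
  apply Integrable.mono' (g := fun s => Real.exp ε * Real.exp (-(ε * s ^ 2)))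
  · have : Integrable (fun s : ℝ => Real.exp (-ε * s ^ 2)) := integrable_exp_neg_mul_sq hε
    simpa [neg_mul] using this.const_mul (Real.exp ε)
  · exact continuous_cF.aestronglyMeasurable
  · filter_upwards with s
    rw [norm_cF_eq, hw, ← Real.exp_add, Real.exp_le_exp]
    obtain ⟨m, hm⟩ := hke
    have hk2 : k = 2 * m := by omega
    have hm1 : m ≠ 0 := by omega
    have hclaim : s ^ 2 ≤ s ^ k + 1 := by
      have hsk : s ^ k = (s ^ 2) ^ m := by rw [hk2, pow_mul]
      rcases le_or_gt (s ^ 2) 1 with hs | hs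
      · have : 0 ≤ s ^ k := Even.pow_nonneg ⟨m, hm⟩ s
        linarith
      · have : s ^ 2 ≤ (s ^ 2) ^ m := le_self_pow₀ hs.le hm1
        rw [hsk]; linarith
    nlinarith

section Assemble

variable (hk : 2 ≤ k) (hke : Even k) (hx : x ≤ 0)

noncomputable def G (k : ℕ) (x : ℝ) (j : ℕ) (ε : ℝ) : ℂ :=
  ∫ s in (-(s0 k x + 2 + j))..(s0 k x + 2 + j), cF k x ε s

include hk hke hx

lemma tail_diff (ε : ℝ) (hε : 0 ≤ ε) (n m : ℕ) (hnm : n ≤ m) :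
    ‖G k x m ε - G k x n ε‖ ≤ 4 / (n + 1) := by
  have hS := s0_nonneg (x := x) hk hx
  set Rn := s0 k x + 2 + n with hRn
  set Rm := s0 k x + 2 + m with hRm
  have hnm' : (n:ℝ) ≤ m := by exact_mod_cast hnm
  have hRnm : Rn ≤ Rm := by rw [hRn, hRm]; linarith
  have hInt : ∀ u v : ℝ, IntervalIntegrable (cF k x ε) volume u v :=
    fun u v => continuous_cF.intervalIntegrable u v
  have hsplit : G k x m ε - G k x n ε
      = (∫ s in (-Rm)..(-Rn), cF k x ε s) + ∫ s in Rn..Rm, cF k x ε s := by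
    rw [G, G, ← hRn, ← hRm]
    rw [← intervalIntegral.integral_add_adjacent_intervals (a := -Rm) (b := -Rn) (c := Rm)
      (hInt _ _) (hInt _ _),
      ← intervalIntegral.integral_add_adjacent_intervals (a := -Rn) (b := Rn) (c := Rm)
      (hInt _ _) (hInt _ _)]
    ring
  have hnpos : (0:ℝ) < n + 1 := by positivity
  have hL : ‖∫ s in (-Rm)..(-Rn), cF k x ε s‖ ≤ 2 / (n + 1) := by
    have hdpn : dp k x (-Rn) ≤ -((n:ℝ) + 1) := dp_left_far hk hke hx n (Nat.cast_nonneg n)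
    refine le_trans (tail_left hε hk hke (by rw [hRn]; linarith) (by linarith) (by linarith)) ?_
    rw [div_le_div_iff₀ (by linarith) hnpos]
    linarith
  have hR : ‖∫ s in Rn..Rm, cF k x ε s‖ ≤ 2 / (n + 1) := by
    have hdpn : (n:ℝ) + 1 ≤ dp k x Rn := dp_right_far hk hke hx n (Nat.cast_nonneg n)
    refine le_trans (tail_right hε hk hke (by rw [hRn]; linarith) hRnm (by linarith)) ?_
    rw [div_le_div_iff₀ (by linarith) hnpos]
    linarith
  rw [hsplit]
  calc ‖_ + _‖ ≤ ‖∫ s in (-Rm)..(-Rn), cF k x ε s‖ + ‖∫ s in Rn..Rm, cF k x ε s‖ :=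
        norm_add_le _ _
    _ ≤ 2 / (n + 1) + 2 / (n + 1) := add_le_add hL hR
    _ = 4 / (n + 1) := by ring

lemma G_le_six (j : ℕ) (ε : ℝ) (hε : 0 ≤ ε) : ‖G k x j ε‖ ≤ 6 := by
  have hS := s0_nonneg (x := x) hk hx
  apply main_bound hk hke hx ε hε
  · apply le_min
    · have : (0:ℝ) ≤ j := Nat.cast_nonneg j
      linarith
    · have : (0:ℝ) ≤ j := Nat.cast_nonneg j
      linarith
  · have : (0:ℝ) ≤ j := Nat.cast_nonneg j
    linarith

lemma b_tendsto : Tendsto (fun n : ℕ => 4 / ((n:ℝ) + 1)) atTop (nhds 0) := by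
  have h := tendsto_one_div_add_atTop_nhds_zero_nat.const_mul (4:ℝ)
  simpa [div_eq_mul_inv, mul_comm, one_div] using h

lemma G_cauchy : CauchySeq (fun j => G k x j 0) := by
  apply cauchySeq_of_le_tendsto_0' (fun n : ℕ => 4 / ((n:ℝ) + 1))
  · intro n m hnm
    rw [dist_eq_norm, norm_sub_rev]
    exact tail_diff hk hke hx 0 le_rfl n m hnm
  · exact b_tendsto (x := x) hk hke hx

lemma G_tendsto_F (ε : ℝ) (hε : 0 < ε) :
    Tendsto (fun j : ℕ => G k x j ε) atTop (nhds (∫ s : ℝ, cF k x ε s)) := by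
  apply intervalIntegral_tendsto_integral (integrable_cF hk hke hε)
  · have h1 : Tendsto (fun j : ℕ => s0 k x + 2 + (j:ℝ)) atTop atTop :=
      tendsto_atTop_add_const_left _ _ tendsto_natCast_atTop_atTop
    exact tendsto_neg_atTop_atBot.comp h1
  · exact tendsto_atTop_add_const_left _ _ tendsto_natCast_atTop_atTop

lemma F_tail (ε : ℝ) (hε : 0 < ε) (n : ℕ) :
    ‖(∫ s : ℝ, cF k x ε s) - G k x n ε‖ ≤ 4 / (n + 1) := by
  have h1 : Tendsto (fun m : ℕ => ‖G k x m ε - G k x n ε‖) atTop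
      (nhds ‖(∫ s : ℝ, cF k x ε s) - G k x n ε‖) :=
    ((G_tendsto_F hk hke hx ε hε).sub_const _).norm
  apply le_of_tendsto h1
  filter_upwards [eventually_ge_atTop n] with m hm
  exact tail_diff hk hke hx ε hε.le n m hm

lemma G_cont (n : ℕ) :
    Tendsto (fun ε => G k x n ε) (nhdsWithin 0 (Set.Ioi 0)) (nhds (G k x n 0)) := by
  apply intervalIntegral.tendsto_integral_filter_of_dominated_convergence (bound := fun _ => 1)
  · filter_upwards with ε
    exact continuous_cF.aestronglyMeasurable.restrict
  · filter_upwards [self_mem_nhdsWithin] with ε (hε : ε ∈ Set.Ioi 0)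
    filter_upwards with s _
    exact norm_cF hke (le_of_lt hε)
  · exact intervalIntegrable_const
  · filter_upwards with s _
    have hc : Continuous fun ε : ℝ => cF k x ε s := by
      unfold cF hw
      fun_prop
    exact (hc.tendsto 0).mono_left nhdsWithin_le_nhds

lemma final_neg :
    ∃ A : ℂ, Tendsto (fun ε : ℝ => ∫ s : ℝ, cF k x ε s)
      (nhdsWithin 0 (Set.Ioi 0)) (nhds A) ∧ ‖A‖ ≤ 6 := by
  obtain ⟨A, hA⟩ := cauchySeq_tendsto_of_complete (G_cauchy hk hke hx)
  refine ⟨A, ?_, ?_⟩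
  · rw [Metric.tendsto_nhds]
    intro δ hδ
    have h1 : ∀ᶠ n : ℕ in atTop, dist (G k x n 0) A < δ / 3 :=
      (Metric.tendsto_nhds.1 hA) (δ / 3) (by linarith)
    have h2 : ∀ᶠ n : ℕ in atTop, 4 / ((n:ℝ) + 1) < δ / 3 := by
      have := (b_tendsto (x := x) hk hke hx)
      exact this.eventually_lt_const (by linarith)
    obtain ⟨n, hn1, hn2⟩ := (h1.and h2).exists
    have h3 : ∀ᶠ ε in nhdsWithin (0:ℝ) (Set.Ioi 0), dist (G k x n ε) (G k x n 0) < δ / 3 :=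
      (Metric.tendsto_nhds.1 (G_cont hk hke hx n)) (δ / 3) (by linarith)
    filter_upwards [h3, self_mem_nhdsWithin] with ε hε3 (hε : ε ∈ Set.Ioi 0)
    have hεpos : 0 < ε := hε
    calc dist (∫ s : ℝ, cF k x ε s) A
        ≤ dist (∫ s : ℝ, cF k x ε s) (G k x n ε) + dist (G k x n ε) (G k x n 0)
          + dist (G k x n 0) A := dist_triangle4 _ _ _ _
      _ < δ / 3 + δ / 3 + δ / 3 := by
          apply add_lt_add_of_lt_of_lt _ hn1
          apply add_lt_add_of_le_of_lt _ hε3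
          rw [dist_eq_norm]
          exact le_of_lt (lt_of_le_of_lt (F_tail hk hke hx ε hεpos n) hn2)
      _ = δ := by ring
  · have h6 : ∀ j : ℕ, ‖G k x j 0‖ ≤ 6 := fun j => G_le_six hk hke hx j 0 le_rfl
    exact le_of_tendsto hA.norm (Eventually.of_forall h6)

end Assemble

lemma integrand_eq (k : ℕ) (x ε s : ℝ) :
    Complex.exp (-(↑(ε * s ^ k)) + ↑(x * s) * Complex.I + ↑(s ^ k) * Complex.I)
      = cF k x ε s := by
  rw [cF, hw, Complex.ofReal_exp, ← Complex.exp_add]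
  congr 1
  push_cast
  ring

lemma final_any (hk : 2 ≤ k) (hke : Even k) (x : ℝ) :
    ∃ A : ℂ,
      Tendsto
        (fun ε : ℝ =>
          ∫ s : ℝ, Complex.exp (-(↑(ε * s ^ k)) + ↑(x * s) * Complex.I + ↑(s ^ k) * Complex.I))
        (nhdsWithin 0 (Set.Ioi 0)) (nhds A) ∧ ‖A‖ ≤ 6 := by
  rcases le_or_gt x 0 with hx | hx
  · obtain ⟨A, hA, h6⟩ := final_neg hk hke hx
    refine ⟨A, ?_, h6⟩
    have : (fun ε : ℝ =>
        ∫ s : ℝ, Complex.exp (-(↑(ε * s ^ k)) + ↑(x * s) * Complex.I + ↑(s ^ k) * Complex.I))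
        = fun ε : ℝ => ∫ s : ℝ, cF k x ε s := by
      funext ε
      simp_rw [integrand_eq]
    rw [this]
    exact hA
  · have hx' : -x ≤ 0 := by linarith
    obtain ⟨A, hA, h6⟩ := final_neg hk hke hx'
    refine ⟨A, ?_, h6⟩
    have key : (fun ε : ℝ =>
        ∫ s : ℝ, Complex.exp (-(↑(ε * s ^ k)) + ↑(x * s) * Complex.I + ↑(s ^ k) * Complex.I))
        = fun ε : ℝ => ∫ s : ℝ, cF k (-x) ε s := by
      funext ε
      have h1 : ∀ s : ℝ, cF k (-x) ε s
          = (fun t : ℝ => Complex.exp (-(↑(ε * t ^ k)) + ↑(x * t) * Complex.I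
              + ↑(t ^ k) * Complex.I)) (-s) := by
        intro s
        rw [← integrand_eq k (-x) ε s]
        have e1 : ε * (-s) ^ k = ε * s ^ k := by rw [hke.neg_pow]
        have e2 : x * (-s) = -x * s := by ring
        have e3 : (-s) ^ k = s ^ k := hke.neg_pow s
        simp only [e1, e2, e3]
      calc (∫ s : ℝ, Complex.exp (-(↑(ε * s ^ k)) + ↑(x * s) * Complex.I + ↑(s ^ k) * Complex.I))
          = ∫ s : ℝ, (fun t : ℝ => Complex.exp (-(↑(ε * t ^ k)) + ↑(x * t) * Complex.I
              + ↑(t ^ k) * Complex.I)) (-s) := (integral_neg_eq_self _ _).symm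
        _ = ∫ s : ℝ, cF k (-x) ε s := by
            congr 1
            funext s
            exact (h1 s).symm
    rw [key]
    exact hA

end OscAux

/-- For every even integer `k ≥ 2` and every real `x`, the improper oscillatory integral
`A_k(x) = lim_{ε→0+} ∫ exp(-ε s^k + i x s + i s^k) ds` exists and `|A_k(x)| ≤ 6`. -/
theorem stmt_0 (k : ℕ) (hk : 2 ≤ k) (hke : Even k) (x : ℝ) :
    ∃ A : ℂ,
      Tendsto
        (fun ε : ℝ =>
          ∫ s : ℝ, Complex.exp (-(↑(ε * s ^ k)) + ↑(x * s) * Complex.I + ↑(s ^ k) * Complex.I))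
        (nhdsWithin 0 (Set.Ioi 0)) (nhds A) ∧
      ‖A‖ ≤ 6 := by
  obtain ⟨A, hA, h6⟩ := OscAux.final_any hk hke x
  exact ⟨A, hA, h6⟩
end

section
/- For every integer k ≥ 2 (even or odd) and every real x, the oscillatory integral A_k(x) = lim_{ε→0+} ∫_{-∞}^{∞} exp(-ε |s|^k + i x s + i s^k) ds exists and satisfies |A_k(x)| ≤ 12. -/
open MeasureTheory Filter Set Complex Topology

noncomputable section

namespace Osc

/-- The unit-modulus oscillatory integrand. -/
def e (k : ℕ) (a : ℝ) (s : ℝ) : ℂ := Complex.exp ((a * s + s ^ k : ℝ) * Complex.I)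

/-- Derivative of the phase. -/
def D (k : ℕ) (a : ℝ) (s : ℝ) : ℝ := a + k * s ^ (k - 1)

/-- Second derivative of the phase. -/
def D2 (k : ℕ) (s : ℝ) : ℝ := k * ((k - 1) * s ^ (k - 2))

/-- The partial oscillatory integral. -/
def g (k : ℕ) (a : ℝ) (R : ℝ) : ℂ := ∫ s in (0:ℝ)..R, e k a s

def u (k : ℕ) (a : ℝ) (s : ℝ) : ℂ := (Complex.I * D k a s)⁻¹

def u' (k : ℕ) (a : ℝ) (s : ℝ) : ℂ := Complex.I * ((D2 k s / (D k a s) ^ 2 : ℝ) : ℂ)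

variable (k : ℕ) (a : ℝ)

lemma hasDerivAt_phase (s : ℝ) :
    HasDerivAt (fun s : ℝ => a * s + s ^ k) (D k a s) s := by
  have h1 : HasDerivAt (fun s : ℝ => a * s) a s := by
    simpa using (hasDerivAt_id s).const_mul a
  have h2 : HasDerivAt (fun s : ℝ => s ^ k) ((k : ℝ) * s ^ (k - 1)) s := by
    simpa using hasDerivAt_pow k s
  exact h1.add h2

lemma hasDerivAt_D (hk : 2 ≤ k) (s : ℝ) : HasDerivAt (D k a) (D2 k s) s := by
  have h2 : HasDerivAt (fun s : ℝ => s ^ (k - 1)) (((k - 1 : ℕ) : ℝ) * s ^ (k - 2)) s := by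
    have := hasDerivAt_pow (k - 1) s
    rwa [show k - 1 - 1 = k - 2 by omega] at this
  have := (h2.const_mul (k : ℝ)).const_add a
  have hc : ((k - 1 : ℕ) : ℝ) = (k : ℝ) - 1 := by
    have : 1 ≤ k := by omega
    push_cast [this]; ring
  rw [hc] at this
  exact this

lemma continuous_D : Continuous (D k a) := by
  unfold D; continuity

lemma hasDerivAt_e (s : ℝ) :
    HasDerivAt (e k a) (Complex.I * D k a s * e k a s) s := by
  have h1 : HasDerivAt (fun s : ℝ => ((a * s + s ^ k : ℝ) : ℂ) * Complex.I)
      ((D k a s : ℂ) * Complex.I) s :=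
    ((hasDerivAt_phase k a s).ofReal_comp).mul_const Complex.I
  have := h1.cexp
  unfold e
  convert this using 1
  ring

lemma continuous_e : Continuous (e k a) := by
  unfold e; continuity

lemma norm_e (s : ℝ) : ‖e k a s‖ = 1 := by
  unfold e
  rw [Complex.norm_exp_ofReal_mul_I]

lemma D_mono (hk : 2 ≤ k) {s t : ℝ} (hs : 0 ≤ s) (hst : s ≤ t) : D k a s ≤ D k a t := by
  have : s ^ (k - 1) ≤ t ^ (k - 1) := pow_le_pow_left₀ hs hst _
  have hknn : (0:ℝ) ≤ k := by positivity
  unfold D; nlinarith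

lemma D2_nonneg (hk : 2 ≤ k) {s : ℝ} (hs : 0 ≤ s) : 0 ≤ D2 k s := by
  have h1 : (1:ℝ) ≤ (k:ℝ) := by exact_mod_cast Nat.one_le_of_lt hk
  have h2 : (0:ℝ) ≤ s ^ (k - 2) := by positivity
  unfold D2
  have : (0:ℝ) ≤ (↑k - 1) * s ^ (k - 2) := by nlinarith
  positivity


lemma u_eq : u k a = fun s => -Complex.I * ((D k a s)⁻¹ : ℝ) := by
  funext s
  unfold u
  rw [mul_inv, Complex.inv_I]
  push_cast
  ring

lemma hasDerivAt_u (hk : 2 ≤ k) {s : ℝ} (hD : D k a s ≠ 0) :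
    HasDerivAt (u k a) (u' k a s) s := by
  rw [u_eq]
  have hinv : HasDerivAt (fun s : ℝ => (D k a s)⁻¹) (-(D2 k s) / (D k a s) ^ 2) s :=
    (hasDerivAt_D k a hk s).inv hD
  have := (hinv.ofReal_comp).const_mul (-Complex.I)
  refine this.congr_deriv ?_
  unfold u'
  push_cast
  ring

lemma continuousOn_u' (hk : 2 ≤ k) {S : Set ℝ} (hD0 : ∀ s ∈ S, D k a s ≠ 0) :
    ContinuousOn (u' k a) S := by
  unfold u'
  apply ContinuousOn.mul continuousOn_const
  apply Complex.continuous_ofReal.comp_continuousOn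
  apply ContinuousOn.div
  · exact (by unfold D2; continuity : Continuous fun s : ℝ => D2 k s).continuousOn
  · exact ((continuous_D k a).pow 2).continuousOn
  · intro s hs; exact pow_ne_zero _ (hD0 s hs)

lemma ibp (hk : 2 ≤ k) {α β : ℝ} (hαβ : α ≤ β)
    (hD0 : ∀ s ∈ Icc α β, D k a s ≠ 0) :
    ∫ s in α..β, e k a s
      = u k a β * e k a β - u k a α * e k a α - ∫ s in α..β, u' k a s * e k a s := by
  have huicc : uIcc α β = Icc α β := uIcc_of_le hαβ
  have hu : ∀ s ∈ uIcc α β, HasDerivAt (u k a) (u' k a s) s := by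
    intro s hs; exact hasDerivAt_u k a hk (hD0 s (huicc ▸ hs))
  have hv : ∀ s ∈ uIcc α β, HasDerivAt (e k a) (Complex.I * D k a s * e k a s) s :=
    fun s _ => hasDerivAt_e k a s
  have hu'int : IntervalIntegrable (u' k a) volume α β := by
    apply ContinuousOn.intervalIntegrable
    rw [huicc]; exact continuousOn_u' k a hk hD0
  have hv'int : IntervalIntegrable (fun s => Complex.I * D k a s * e k a s) volume α β := by
    apply Continuous.intervalIntegrable
    exact (continuous_const.mul ((Complex.continuous_ofReal.comp (continuous_D k a)))).mul
      (continuous_e k a)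
  have key := intervalIntegral.integral_mul_deriv_eq_deriv_mul hu hv hu'int hv'int
  rw [← key]
  apply intervalIntegral.integral_congr
  intro s hs
  have hD : D k a s ≠ 0 := hD0 s (huicc ▸ hs)
  have h0 : Complex.I * (D k a s : ℂ) ≠ 0 :=
    mul_ne_zero Complex.I_ne_zero (Complex.ofReal_ne_zero.2 hD)
  unfold u
  field_simp
  rw [mul_div_cancel_right₀ _ (Complex.ofReal_ne_zero.2 hD)]

lemma integral_D2_div (hk : 2 ≤ k) {α β : ℝ} (hαβ : α ≤ β)
    (hD0 : ∀ s ∈ Icc α β, D k a s ≠ 0) :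
    ∫ s in α..β, D2 k s / (D k a s) ^ 2 = (D k a α)⁻¹ - (D k a β)⁻¹ := by
  have huicc : uIcc α β = Icc α β := uIcc_of_le hαβ
  have hder : ∀ s ∈ uIcc α β, HasDerivAt (fun t => -(D k a t)⁻¹) (D2 k s / (D k a s) ^ 2) s := by
    intro s hs
    have := ((hasDerivAt_D k a hk s).inv (hD0 s (huicc ▸ hs))).neg
    refine this.congr_deriv ?_
    ring
  have hint : IntervalIntegrable (fun s => D2 k s / (D k a s) ^ 2) volume α β := by
    apply ContinuousOn.intervalIntegrable
    rw [huicc]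
    apply ContinuousOn.div
    · exact (by unfold D2; continuity : Continuous fun s : ℝ => D2 k s).continuousOn
    · exact ((continuous_D k a).pow 2).continuousOn
    · intro s hs; exact pow_ne_zero _ (hD0 s hs)
  rw [intervalIntegral.integral_eq_sub_of_hasDerivAt hder hint]
  ring

lemma vdc (hk : 2 ≤ k) {α β lam : ℝ} (hlam : 2 ≤ lam) (h0 : 0 ≤ α) (hαβ : α ≤ β)
    (hsign : lam ≤ D k a α ∨ D k a β ≤ -lam) :
    ‖∫ s in α..β, e k a s‖ ≤ 3 / lam := by
  have hlam0 : (0:ℝ) < lam := by linarith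
  have hD0 : ∀ s ∈ Icc α β, D k a s ≠ 0 := by
    intro s hs
    rcases hsign with h | h
    · have := D_mono k a hk h0 hs.1
      intro hc; rw [hc] at this; linarith
    · have := D_mono k a hk (le_trans h0 hs.1) hs.2
      intro hc; rw [hc] at this; linarith
  have normu : ∀ s ∈ Icc α β, ‖u k a s‖ ≤ lam⁻¹ := by
    intro s hs
    have habs : lam ≤ |D k a s| := by
      rcases hsign with h | h
      · have := D_mono k a hk h0 hs.1
        rw [abs_of_pos (by linarith)]; linarith
      · have := D_mono k a hk (le_trans h0 hs.1) hs.2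
        rw [abs_of_neg (by linarith)]; linarith
    rw [u_eq]
    have : ‖-Complex.I * ((D k a s)⁻¹ : ℝ)‖ = |D k a s|⁻¹ := by
      rw [norm_mul, norm_neg]
      simp [abs_inv]
    rw [this]
    exact inv_anti₀ hlam0 habs
  have h3 : ‖∫ s in α..β, u' k a s * e k a s‖ ≤ lam⁻¹ := by
    have hn : ∫ s in α..β, ‖u' k a s * e k a s‖ = ∫ s in α..β, D2 k s / (D k a s) ^ 2 := by
      apply intervalIntegral.integral_congr
      intro s hs
      rw [uIcc_of_le hαβ] at hs
      have hs0 : (0:ℝ) ≤ s := le_trans h0 hs.1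
      show ‖u' k a s * e k a s‖ = D2 k s / D k a s ^ 2
      rw [norm_mul, norm_e, mul_one]
      unfold u'
      rw [norm_mul]
      simp only [Complex.norm_I, Complex.norm_real, Real.norm_eq_abs, one_mul]
      exact _root_.abs_of_nonneg (div_nonneg (D2_nonneg k hk hs0) (sq_nonneg _))
    calc ‖∫ s in α..β, u' k a s * e k a s‖
        ≤ ∫ s in α..β, ‖u' k a s * e k a s‖ :=
          intervalIntegral.norm_integral_le_integral_norm hαβ
      _ = (D k a α)⁻¹ - (D k a β)⁻¹ := by rw [hn, integral_D2_div k a hk hαβ hD0]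
      _ ≤ lam⁻¹ := by
          rcases hsign with h | h
          · have h1 : 0 < D k a α := by linarith
            have h2 : D k a α ≤ D k a β := D_mono k a hk h0 hαβ
            have h3 : (D k a α)⁻¹ ≤ lam⁻¹ := inv_anti₀ hlam0 h
            have h4 : 0 < (D k a β)⁻¹ := inv_pos.2 (by linarith)
            linarith
          · have h2 : D k a α ≤ D k a β := D_mono k a hk h0 hαβ
            have h1 : D k a α < 0 := by linarith
            have h3 : (D k a α)⁻¹ < 0 := inv_neg''.2 h1
            have h5 : lam ≤ -D k a β := by linarith
            have h6 : (-D k a β)⁻¹ ≤ lam⁻¹ := inv_anti₀ hlam0 h5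
            have h7 : -(D k a β)⁻¹ = (-D k a β)⁻¹ := by rw [inv_neg]
            linarith
  have hmema : α ∈ Icc α β := ⟨le_refl _, hαβ⟩
  have hmemb : β ∈ Icc α β := ⟨hαβ, le_refl _⟩
  rw [ibp k a hk hαβ hD0]
  have e1 : ‖u k a β * e k a β‖ ≤ lam⁻¹ := by
    rw [norm_mul, norm_e, mul_one]; exact normu β hmemb
  have e2 : ‖u k a α * e k a α‖ ≤ lam⁻¹ := by
    rw [norm_mul, norm_e, mul_one]; exact normu α hmema
  calc ‖u k a β * e k a β - u k a α * e k a α - ∫ s in α..β, u' k a s * e k a s‖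
      ≤ ‖u k a β * e k a β - u k a α * e k a α‖ + ‖∫ s in α..β, u' k a s * e k a s‖ :=
        norm_sub_le _ _
    _ ≤ (‖u k a β * e k a β‖ + ‖u k a α * e k a α‖) + ‖∫ s in α..β, u' k a s * e k a s‖ := by
        have := norm_sub_le (u k a β * e k a β) (u k a α * e k a α)
        linarith
    _ ≤ lam⁻¹ + lam⁻¹ + lam⁻¹ := by linarith
    _ = 3 / lam := by field_simp; ring


lemma pow_add_one_le : ∀ m : ℕ, ∀ y : ℝ, 0 ≤ y → y ^ m + 1 ≤ (y + 1) ^ m + 1 ∧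
    (1 ≤ m → y ^ m + 1 ≤ (y + 1) ^ m) := by
  intro m
  induction m with
  | zero => intro y hy; exact ⟨by simp, by omega⟩
  | succ n ih =>
    intro y hy
    have hyn : 0 ≤ y ^ n := pow_nonneg hy n
    have hy1n : 0 ≤ (y + 1) ^ n := pow_nonneg (by linarith) n
    have key : y ^ (n + 1) + 1 ≤ (y + 1) ^ (n + 1) := by
      rcases Nat.eq_zero_or_pos n with h0 | hpos
      · subst h0; simp
      · have h := (ih y hy).2 hpos
        have : (y + 1) ^ (n + 1) = (y + 1) ^ n * (y + 1) := pow_succ _ _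
        rw [this]
        have hmul : (y ^ n + 1) * (y + 1) ≤ (y + 1) ^ n * (y + 1) := by nlinarith
        nlinarith [pow_succ y n]
    exact ⟨by linarith, fun _ => key⟩

/-- Bound for the location of the stationary point of `a*s + s^k`. -/
def c (k : ℕ) (a : ℝ) : ℝ := (max (-a) 0 / k) ^ (((k - 1 : ℕ) : ℝ))⁻¹

lemma c_nonneg (k : ℕ) (a : ℝ) : 0 ≤ c k a :=
  Real.rpow_nonneg (div_nonneg (le_max_right _ _) (Nat.cast_nonneg k)) _

variable (k : ℕ) (a : ℝ)

lemma c_pow (hk : 2 ≤ k) : (k : ℝ) * (c k a) ^ (k - 1) = max (-a) 0 := by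
  have hb : (0:ℝ) ≤ max (-a) 0 / k := div_nonneg (le_max_right _ _) (Nat.cast_nonneg k)
  have hm : k - 1 ≠ 0 := by omega
  have := Real.rpow_inv_natCast_pow hb hm
  unfold c
  rw [this]
  have hk0 : (k:ℝ) ≠ 0 := by positivity
  field_simp

lemma D_c1 (hk : 2 ≤ k) : 2 ≤ D k a (c k a + 1) := by
  have h1 : (c k a) ^ (k-1) + 1 ≤ (c k a + 1) ^ (k-1) :=
    (pow_add_one_le (k-1) (c k a) (c_nonneg k a)).2 (by omega)
  have h2 := c_pow k a hk
  have hmax : -a ≤ max (-a) 0 := le_max_left _ _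
  have hk2 : (2:ℝ) ≤ (k:ℝ) := by exact_mod_cast hk
  unfold D
  nlinarith

lemma D_cm (hk : 2 ≤ k) (hc : 1 < c k a) : D k a (c k a - 1) ≤ -2 := by
  have hy : (0:ℝ) ≤ c k a - 1 := by linarith
  have h1 : (c k a - 1) ^ (k-1) + 1 ≤ (c k a - 1 + 1) ^ (k-1) :=
    (pow_add_one_le (k-1) (c k a - 1) hy).2 (by omega)
  rw [show c k a - 1 + 1 = c k a by ring] at h1
  have h2 := c_pow k a hk
  have hk2 : (2:ℝ) ≤ (k:ℝ) := by exact_mod_cast hk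
  have hcp : 1 ≤ (c k a) ^ (k-1) := one_le_pow₀ (by linarith)
  have hmaxpos : (0:ℝ) < max (-a) 0 := by nlinarith
  have hmax : max (-a) 0 = -a := by
    rcases max_cases (-a) (0:ℝ) with ⟨h, _⟩ | ⟨h, _⟩
    · exact h
    · rw [h] at hmaxpos; linarith
  unfold D
  nlinarith

lemma e_intervalIntegrable (x y : ℝ) : IntervalIntegrable (e k a) volume x y :=
  (continuous_e k a).intervalIntegrable x y

lemma g_bound (hk : 2 ≤ k) : ∀ R, 0 ≤ R → ‖g k a R‖ ≤ 5 := by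
  set cc := c k a with hcc
  set b := max (cc - 1) 0 with hb
  have hb0 : 0 ≤ b := le_max_right _ _
  have hcc0 : 0 ≤ cc := c_nonneg k a
  have hbc : b ≤ cc + 1 := by
    apply max_le <;> linarith
  have hgb : ‖g k a b‖ ≤ 3/2 := by
    by_cases hc1 : 1 < cc
    · have hbeq : b = cc - 1 := max_eq_left (by linarith)
      rw [hbeq]
      unfold g
      have := vdc k a hk (le_refl (2:ℝ)) (le_refl (0:ℝ)) (by linarith : (0:ℝ) ≤ cc - 1)
        (Or.inr (by simpa using D_cm k a hk hc1))
      linarith [this]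
    · have hbeq : b = 0 := max_eq_right (by linarith)
      rw [hbeq]
      unfold g
      simp only [intervalIntegral.integral_same, norm_zero]
      norm_num
  have hgmid : ∀ R, b ≤ R → R ≤ cc + 1 → ‖g k a R‖ ≤ 7/2 := by
    intro R h1 h2
    have hsplit : g k a b + ∫ s in b..R, e k a s = g k a R := by
      unfold g
      exact intervalIntegral.integral_add_adjacent_intervals
        (e_intervalIntegrable k a _ _) (e_intervalIntegrable k a _ _)
    have htriv : ‖∫ s in b..R, e k a s‖ ≤ 2 := by
      have := intervalIntegral.norm_integral_le_of_norm_le_const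
        (C := 1) (f := e k a) (a := b) (b := R) (fun x _ => le_of_eq (norm_e k a x))
      have habs : |R - b| ≤ 2 := by
        rw [_root_.abs_of_nonneg (by linarith)]
        have : cc - 1 ≤ b := le_max_left _ _
        linarith
      linarith
    calc ‖g k a R‖ = ‖g k a b + ∫ s in b..R, e k a s‖ := by rw [hsplit]
      _ ≤ ‖g k a b‖ + ‖∫ s in b..R, e k a s‖ := norm_add_le _ _
      _ ≤ 7/2 := by linarith
  intro R hR
  rcases le_or_gt R (cc + 1) with hR1 | hR1
  · rcases le_or_gt b R with h1 | h1
    · linarith [hgmid R h1 hR1]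
    · -- R < b, so cc > 1 and R ≤ cc - 1
      have hc1 : 1 < cc := by
        by_contra hcon
        have : b = 0 := max_eq_right (by push_neg at hcon; linarith)
        rw [this] at h1; linarith
      have hbeq : b = cc - 1 := max_eq_left (by linarith)
      have hDR : D k a R ≤ -2 := by
        have := D_mono k a hk hR (by rw [hbeq] at h1; linarith : R ≤ cc - 1)
        linarith [D_cm k a hk hc1]
      have := vdc k a hk (le_refl (2:ℝ)) (le_refl (0:ℝ)) hR (Or.inr (by simpa using hDR))
      unfold g
      linarith [this]
  · have hsplit : g k a (cc+1) + ∫ s in (cc+1)..R, e k a s = g k a R := by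
      unfold g
      exact intervalIntegral.integral_add_adjacent_intervals
        (e_intervalIntegrable k a _ _) (e_intervalIntegrable k a _ _)
    have h2 := vdc k a hk (le_refl (2:ℝ)) (by linarith : (0:ℝ) ≤ cc + 1)
      (le_of_lt hR1) (Or.inl (D_c1 k a hk))
    have h3 := hgmid (cc+1) hbc (le_refl _)
    calc ‖g k a R‖ = ‖g k a (cc+1) + ∫ s in (cc+1)..R, e k a s‖ := by rw [hsplit]
      _ ≤ ‖g k a (cc+1)‖ + ‖∫ s in (cc+1)..R, e k a s‖ := norm_add_le _ _
      _ ≤ 5 := by linarith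

lemma g_continuous : Continuous (g k a) :=
  intervalIntegral.continuous_primitive (fun x y => e_intervalIntegrable k a x y) 0

lemma D_tendsto (hk : 2 ≤ k) : Tendsto (D k a) atTop atTop := by
  unfold D
  apply tendsto_atTop_add_const_left
  apply Tendsto.const_mul_atTop (by positivity : (0:ℝ) < k)
  exact tendsto_pow_atTop (by omega)

lemma g_tendsto (hk : 2 ≤ k) : ∃ G : ℂ, Tendsto (g k a) atTop (𝓝 G) ∧ ‖G‖ ≤ 5 := by
  set c1 := c k a + 1 with hc1def
  have hc10 : (0:ℝ) ≤ c1 := by have := c_nonneg k a; linarith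
  have hD1 : 2 ≤ D k a c1 := D_c1 k a hk
  have hDge : ∀ s, c1 ≤ s → 2 ≤ D k a s := fun s hs => le_trans hD1 (D_mono k a hk hc10 hs)
  have hD2int : IntegrableOn (fun s => D2 k s / (D k a s) ^ 2) (Ioi c1) volume := by
    apply integrableOn_Ioi_deriv_of_nonneg (g := fun t => -(D k a t)⁻¹) (l := 0)
    · apply ContinuousWithinAt.neg
      apply ContinuousWithinAt.inv₀
      · exact (continuous_D k a).continuousWithinAt
      · intro h; rw [h] at hD1; norm_num at hD1
    · intro s hs
      have hs' : c1 ≤ s := le_of_lt hs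
      have hD : D k a s ≠ 0 := by have := hDge s hs'; intro h; rw [h] at this; linarith
      have := ((hasDerivAt_D k a hk s).inv hD).neg
      refine this.congr_deriv ?_
      ring
    · intro s hs
      have hs0 : (0:ℝ) ≤ s := le_trans hc10 (le_of_lt hs)
      exact div_nonneg (D2_nonneg k hk hs0) (sq_nonneg _)
    · have : Tendsto (fun t => (D k a t)⁻¹) atTop (𝓝 0) :=
        (D_tendsto k a hk).inv_tendsto_atTop
      simpa using this.neg
  have hueint : IntegrableOn (fun s => u' k a s * e k a s) (Ioi c1) volume := by
    apply Integrable.mono' hD2int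
    · apply ContinuousOn.aestronglyMeasurable _ measurableSet_Ioi
      apply ContinuousOn.mul _ (continuous_e k a).continuousOn
      apply continuousOn_u' k a hk
      intro s hs
      have := hDge s (le_of_lt hs); intro h; rw [h] at this; linarith
    · filter_upwards [ae_restrict_mem measurableSet_Ioi] with s hs
      have hs0 : (0:ℝ) ≤ s := le_trans hc10 (le_of_lt hs)
      rw [norm_mul, norm_e, mul_one]
      unfold u'
      rw [norm_mul]
      simp only [Complex.norm_I, Complex.norm_real, Real.norm_eq_abs, one_mul]
      exact le_of_eq (_root_.abs_of_nonneg (div_nonneg (D2_nonneg k hk hs0) (sq_nonneg _)))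
  set T := ∫ s in Ioi c1, u' k a s * e k a s with hT
  have htend : Tendsto (g k a) atTop (𝓝 (g k a c1 + (-(u k a c1 * e k a c1) - T))) := by
    have key : ∀ᶠ R in atTop, g k a c1 + (u k a R * e k a R - u k a c1 * e k a c1
        - ∫ s in c1..R, u' k a s * e k a s) = g k a R := by
      filter_upwards [eventually_ge_atTop c1] with R hR
      have hD0 : ∀ s ∈ Icc c1 R, D k a s ≠ 0 := by
        intro s hs
        have := hDge s hs.1; intro h; rw [h] at this; linarith
      rw [← ibp k a hk hR hD0]
      unfold g
      exact intervalIntegral.integral_add_adjacent_intervals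
        (e_intervalIntegrable k a _ _) (e_intervalIntegrable k a _ _)
    apply Tendsto.congr' key
    apply Tendsto.const_add
    have h1 : Tendsto (fun R => u k a R * e k a R) atTop (𝓝 0) := by
      apply squeeze_zero_norm' (a := fun R => (D k a R)⁻¹)
      · filter_upwards [eventually_ge_atTop c1] with R hR
        have hD : 2 ≤ D k a R := hDge R hR
        rw [norm_mul, norm_e, mul_one, u_eq]
        have : ‖-Complex.I * ((D k a R)⁻¹ : ℝ)‖ = |D k a R|⁻¹ := by
          rw [norm_mul, norm_neg]
          simp [abs_inv]
        rw [this, _root_.abs_of_pos (by linarith)]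
      · exact (D_tendsto k a hk).inv_tendsto_atTop
    have h2 : Tendsto (fun R => ∫ s in c1..R, u' k a s * e k a s) atTop (𝓝 T) :=
      intervalIntegral_tendsto_integral_Ioi c1 hueint tendsto_id
    have := (h1.sub_const (u k a c1 * e k a c1)).sub h2
    simpa using this
  refine ⟨_, htend, ?_⟩
  apply le_of_tendsto htend.norm
  filter_upwards [eventually_ge_atTop (0:ℝ)] with R hR using g_bound k a hk R hR


/-! ### The Abelian limit -/

def q (k : ℕ) (ε s : ℝ) : ℝ := Real.exp (-(ε * s ^ k))

def w (k : ℕ) (ε s : ℝ) : ℝ := ε * k * s ^ (k - 1) * Real.exp (-(ε * s ^ k))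

lemma q_hasDeriv (hk : 2 ≤ k) (ε s : ℝ) : HasDerivAt (q k ε) (-(w k ε s)) s := by
  have h1 : HasDerivAt (fun s : ℝ => -(ε * s ^ k)) (-(ε * (k * s ^ (k-1)))) s :=
    (((hasDerivAt_pow k s).const_mul ε)).neg
  have := h1.exp
  unfold q w
  convert this using 1
  ring

lemma continuous_q (ε : ℝ) : Continuous (q k ε) := by unfold q; continuity

lemma continuous_w (ε : ℝ) : Continuous (w k ε) := by unfold w; continuity

lemma w_nonneg (ε : ℝ) (hε : 0 ≤ ε) {s : ℝ} (hs : 0 ≤ s) : 0 ≤ w k ε s := by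
  unfold w; positivity

lemma q_tendsto (hk : 2 ≤ k) {ε : ℝ} (hε : 0 < ε) :
    Tendsto (q k ε) atTop (𝓝 0) := by
  have hT : Tendsto (fun s : ℝ => ε * s ^ k) atTop atTop :=
    Tendsto.const_mul_atTop hε (tendsto_pow_atTop (by omega))
  have : Tendsto (fun s : ℝ => -(ε * s ^ k)) atTop atBot :=
    tendsto_neg_atTop_atBot.comp hT
  exact Real.tendsto_exp_atBot.comp this

lemma w_integrable (hk : 2 ≤ k) {ε : ℝ} (hε : 0 < ε) :
    IntegrableOn (w k ε) (Ioi (0:ℝ)) volume := by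
  apply integrableOn_Ioi_deriv_of_nonneg (g := fun s => -(q k ε s)) (l := 0)
  · exact ((continuous_q k ε).continuousWithinAt).neg
  · intro s _; exact (q_hasDeriv k hk ε s).neg.congr_deriv (neg_neg _)
  · intro s hs; exact w_nonneg k ε (le_of_lt hε) (le_of_lt hs)
  · simpa using (q_tendsto k hk hε).neg

lemma w_integral (hk : 2 ≤ k) {ε : ℝ} (hε : 0 < ε) :
    ∫ s in Ioi (0:ℝ), w k ε s = 1 := by
  have := integral_Ioi_of_hasDerivAt_of_nonneg (g := fun s => -(q k ε s)) (l := 0)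
    ((continuous_q k ε).continuousWithinAt).neg
    (fun s _ => by exact (q_hasDeriv k hk ε s).neg.congr_deriv (neg_neg _))
    (fun s hs => w_nonneg k ε (le_of_lt hε) (le_of_lt hs))
    (by simpa using (q_tendsto k hk hε).neg)
  rw [this]
  show (0:ℝ) - -q k ε 0 = 1
  unfold q
  rw [zero_pow (by omega : k ≠ 0)]
  norm_num

lemma q_integrable (hk : 2 ≤ k) {ε : ℝ} (hε : 0 < ε) :
    IntegrableOn (q k ε) (Ioi (0:ℝ)) volume := by
  rw [← Ioc_union_Ioi_eq_Ioi (by norm_num : (0:ℝ) ≤ 1)]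
  apply IntegrableOn.union
  · exact (continuous_q k ε).integrableOn_Ioc
  · apply Integrable.mono' (exp_neg_integrableOn_Ioi 1 hε)
    · exact (continuous_q k ε).aestronglyMeasurable
    · filter_upwards [ae_restrict_mem measurableSet_Ioi] with s hs
      have hs1 : (1:ℝ) ≤ s := le_of_lt hs
      rw [Real.norm_eq_abs, _root_.abs_of_pos (by unfold q; positivity)]
      unfold q
      apply Real.exp_le_exp.2
      have : s ^ 1 ≤ s ^ k := pow_le_pow_right₀ hs1 (by omega)
      simp only [pow_one] at this
      nlinarith

variable (x : ℝ)

lemma qe_integrable (hk : 2 ≤ k) {ε : ℝ} (hε : 0 < ε) :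
    IntegrableOn (fun s => (q k ε s : ℂ) * e k a s) (Ioi (0:ℝ)) volume := by
  apply Integrable.mono' (q_integrable k hk hε)
  · exact (((Complex.continuous_ofReal.comp (continuous_q k ε))).mul
      (continuous_e k a)).aestronglyMeasurable
  · filter_upwards with s
    rw [norm_mul, norm_e, mul_one, Complex.norm_real, Real.norm_eq_abs,
      _root_.abs_of_pos (by unfold q; positivity : (0:ℝ) < q k ε s)]

lemma wg_integrable (hk : 2 ≤ k) {ε : ℝ} (hε : 0 < ε) :
    IntegrableOn (fun s => (w k ε s : ℂ) * g k a s) (Ioi (0:ℝ)) volume := by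
  apply Integrable.mono' ((w_integrable k hk hε).const_mul 5)
  · exact ((Complex.continuous_ofReal.comp (continuous_w k ε)).mul
      (g_continuous k a)).aestronglyMeasurable
  · filter_upwards [ae_restrict_mem measurableSet_Ioi] with s hs
    rw [norm_mul, Complex.norm_real, Real.norm_eq_abs,
      _root_.abs_of_nonneg (w_nonneg k ε (le_of_lt hε) (le_of_lt hs))]
    calc w k ε s * ‖g k a s‖ ≤ w k ε s * 5 := by
          apply mul_le_mul_of_nonneg_left (g_bound k a hk s (le_of_lt hs))
            (w_nonneg k ε (le_of_lt hε) (le_of_lt hs))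
      _ = 5 * w k ε s := by ring

lemma hasDerivAt_g (R : ℝ) : HasDerivAt (g k a) (e k a R) R := by
  apply intervalIntegral.integral_hasDerivAt_right (e_intervalIntegrable k a 0 R)
  · exact (continuous_e k a).aestronglyMeasurable.stronglyMeasurableAtFilter
  · exact (continuous_e k a).continuousAt

lemma abel_identity (hk : 2 ≤ k) {ε : ℝ} (hε : 0 < ε) :
    ∫ s in Ioi (0:ℝ), (q k ε s : ℂ) * e k a s
      = ∫ s in Ioi (0:ℝ), (w k ε s : ℂ) * g k a s := by
  have T1 : Tendsto (fun R => ∫ s in (0:ℝ)..R, (q k ε s : ℂ) * e k a s) atTop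
      (𝓝 (∫ s in Ioi (0:ℝ), (q k ε s : ℂ) * e k a s)) :=
    intervalIntegral_tendsto_integral_Ioi 0 (qe_integrable k a hk hε) tendsto_id
  have key : ∀ R : ℝ, ∫ s in (0:ℝ)..R, (q k ε s : ℂ) * e k a s
      = (q k ε R : ℂ) * g k a R + ∫ s in (0:ℝ)..R, (w k ε s : ℂ) * g k a s := by
    intro R
    have hu : ∀ s ∈ uIcc (0:ℝ) R, HasDerivAt (fun s => (q k ε s : ℂ)) ((-(w k ε s) : ℝ) : ℂ) s :=
      fun s _ => (q_hasDeriv k hk ε s).ofReal_comp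
    have hv : ∀ s ∈ uIcc (0:ℝ) R, HasDerivAt (g k a) (e k a s) s := fun s _ => hasDerivAt_g k a s
    have hu' : IntervalIntegrable (fun s => ((-(w k ε s) : ℝ) : ℂ)) volume 0 R :=
      (Complex.continuous_ofReal.comp (continuous_w k ε).neg).intervalIntegrable 0 R
    have hv' : IntervalIntegrable (e k a) volume 0 R := e_intervalIntegrable k a 0 R
    have := intervalIntegral.integral_mul_deriv_eq_deriv_mul hu hv hu' hv'
    rw [this]
    have hg0 : g k a 0 = 0 := intervalIntegral.integral_same
    rw [hg0]
    have : ∫ s in (0:ℝ)..R, ((-(w k ε s) : ℝ) : ℂ) * g k a s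
        = -∫ s in (0:ℝ)..R, (w k ε s : ℝ) * g k a s := by
      rw [← intervalIntegral.integral_neg]
      apply intervalIntegral.integral_congr
      intro s _
      push_cast
      ring
    rw [this]
    ring
  have T3 : Tendsto (fun R => (q k ε R : ℂ) * g k a R) atTop (𝓝 0) := by
    apply squeeze_zero_norm' (a := fun R => 5 * q k ε R)
    · filter_upwards [eventually_ge_atTop (0:ℝ)] with R hR
      rw [norm_mul, Complex.norm_real, Real.norm_eq_abs,
        _root_.abs_of_pos (by unfold q; positivity : (0:ℝ) < q k ε R)]
      calc q k ε R * ‖g k a R‖ ≤ q k ε R * 5 := by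
            apply mul_le_mul_of_nonneg_left (g_bound k a hk R hR)
              (by unfold q; positivity : (0:ℝ) ≤ q k ε R)
        _ = 5 * q k ε R := by ring
    · simpa using (q_tendsto k hk hε).const_mul (5:ℝ)
  have T4 : Tendsto (fun R => ∫ s in (0:ℝ)..R, (w k ε s : ℂ) * g k a s) atTop
      (𝓝 (∫ s in Ioi (0:ℝ), (w k ε s : ℂ) * g k a s)) :=
    intervalIntegral_tendsto_integral_Ioi 0 (wg_integrable k a hk hε) tendsto_id
  have T2 : Tendsto (fun R => ∫ s in (0:ℝ)..R, (q k ε s : ℂ) * e k a s) atTop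
      (𝓝 (0 + ∫ s in Ioi (0:ℝ), (w k ε s : ℂ) * g k a s)) := by
    apply Tendsto.congr (fun R => (key R).symm)
    exact T3.add T4
  have := tendsto_nhds_unique T1 T2
  rwa [zero_add] at this

/-- change of variables: write the weighted average with a fixed weight. -/
lemma change_var (hk : 2 ≤ k) {ε : ℝ} (hε : 0 < ε) :
    ∫ s in Ioi (0:ℝ), (w k ε s : ℂ) * g k a s
      = ∫ t in Ioi (0:ℝ), (w k 1 t : ℂ) * g k a ((ε⁻¹ ^ ((k:ℝ))⁻¹) * t) := by
  set σ := (ε⁻¹) ^ (((k:ℝ))⁻¹) with hσ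
  have hσpos : 0 < σ := Real.rpow_pos_of_pos (inv_pos.2 hε) _
  have hσk : σ ^ k = ε⁻¹ := by
    rw [hσ]
    exact_mod_cast Real.rpow_inv_natCast_pow (inv_nonneg.2 (le_of_lt hε)) (by omega : k ≠ 0)
  have cov := integral_comp_mul_left_Ioi (fun s => (w k ε s : ℂ) * g k a s) 0 hσpos
  rw [mul_zero] at cov
  have : ∫ s in Ioi (0:ℝ), (w k ε s : ℂ) * g k a s
      = σ • ∫ t in Ioi (0:ℝ), (w k ε (σ * t) : ℂ) * g k a (σ * t) := by
    rw [cov, smul_smul, mul_inv_cancel₀ (ne_of_gt hσpos), one_smul]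
  rw [this, ← integral_smul]
  apply setIntegral_congr_fun measurableSet_Ioi
  intro t _
  have hw : σ * w k ε (σ * t) = w k 1 t := by
    unfold w
    have h1 : ε * σ ^ k = 1 := by rw [hσk]; field_simp
    have hσσ : σ * σ ^ (k-1) = σ ^ k := by
      rw [← pow_succ']
      congr 1
      omega
    have h2 : σ * (ε * ↑k * (σ ^ (k-1) * t ^ (k-1))) = (ε * σ ^ k) * ↑k * t ^ (k-1) := by
      rw [← hσσ]; ring
    have h3 : ε * (σ ^ k * t ^ k) = 1 * t ^ k := by rw [← mul_assoc, h1]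
    calc σ * (ε * ↑k * (σ * t) ^ (k-1) * Real.exp (-(ε * (σ * t) ^ k)))
        = (σ * (ε * ↑k * (σ ^ (k-1) * t ^ (k-1)))) * Real.exp (-(ε * (σ ^ k * t ^ k))) := by
          rw [mul_pow, mul_pow]; ring
      _ = (1 * ↑k * t ^ (k-1)) * Real.exp (-(1 * t ^ k)) := by rw [h2, h1, h3]
      _ = w k 1 t / 1 := by unfold w; ring
      _ = w k 1 t := by ring
  calc σ • ((w k ε (σ * t) : ℂ) * g k a (σ * t))
      = ((σ * w k ε (σ * t) : ℝ) : ℂ) * g k a (σ * t) := by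
        rw [Complex.real_smul]
        push_cast
        ring
    _ = (w k 1 t : ℂ) * g k a (σ * t) := by rw [hw]

lemma half_limit (hk : 2 ≤ k) :
    ∃ G : ℂ, Tendsto (fun ε : ℝ => ∫ s in Ioi (0:ℝ), (q k ε s : ℂ) * e k a s)
      (𝓝[>] (0:ℝ)) (𝓝 G) ∧ ‖G‖ ≤ 5 := by
  obtain ⟨G, hG, hGb⟩ := g_tendsto k a hk
  refine ⟨G, ?_, hGb⟩
  have heq : ∀ᶠ ε in 𝓝[>] (0:ℝ), (∫ t in Ioi (0:ℝ), (w k 1 t : ℂ) * g k a ((ε⁻¹ ^ ((k:ℝ))⁻¹) * t))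
      = ∫ s in Ioi (0:ℝ), (q k ε s : ℂ) * e k a s := by
    filter_upwards [self_mem_nhdsWithin] with ε (hε : 0 < ε)
    rw [abel_identity k a hk hε, change_var k a hk hε]
  apply Tendsto.congr' heq
  have hlim : Tendsto (fun ε : ℝ => ∫ t in Ioi (0:ℝ), (w k 1 t : ℂ) * g k a ((ε⁻¹ ^ ((k:ℝ))⁻¹) * t))
      (𝓝[>] (0:ℝ)) (𝓝 (∫ t in Ioi (0:ℝ), (w k 1 t : ℂ) * G)) := by
    apply tendsto_integral_filter_of_dominated_convergence (bound := fun t => 5 * w k 1 t)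
    · filter_upwards with ε
      exact ((Complex.continuous_ofReal.comp (continuous_w k 1)).mul
        ((g_continuous k a).comp (continuous_const.mul continuous_id))).aestronglyMeasurable
    · filter_upwards [self_mem_nhdsWithin] with ε (hε : 0 < ε)
      filter_upwards [ae_restrict_mem measurableSet_Ioi] with t ht
      rw [norm_mul, Complex.norm_real, Real.norm_eq_abs,
        _root_.abs_of_nonneg (w_nonneg k 1 one_pos.le (le_of_lt ht))]
      calc w k 1 t * ‖g k a _‖ ≤ w k 1 t * 5 := by
            apply mul_le_mul_of_nonneg_left
            · apply g_bound k a hk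
              have hσ0 : (0:ℝ) ≤ ε⁻¹ ^ ((k:ℝ))⁻¹ := Real.rpow_nonneg (inv_nonneg.2 hε.le) _
              exact mul_nonneg hσ0 (le_of_lt ht)
            · exact w_nonneg k 1 one_pos.le (le_of_lt ht)
        _ = 5 * w k 1 t := by ring
    · exact (w_integrable k hk one_pos).const_mul 5
    · filter_upwards [ae_restrict_mem measurableSet_Ioi] with t ht
      apply Tendsto.const_mul
      apply hG.comp
      have h1 : Tendsto (fun ε : ℝ => ε⁻¹) (𝓝[>] (0:ℝ)) atTop := tendsto_inv_nhdsGT_zero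
      have h2 : Tendsto (fun y : ℝ => y ^ ((k:ℝ))⁻¹) atTop atTop :=
        tendsto_rpow_atTop (by positivity)
      exact (h2.comp h1).atTop_mul_const ht
  have hval : (∫ t in Ioi (0:ℝ), (w k 1 t : ℂ) * G) = G := by
    rw [integral_mul_const]
    have : ∫ t in Ioi (0:ℝ), (w k 1 t : ℂ) = ((∫ t in Ioi (0:ℝ), w k 1 t : ℝ) : ℂ) :=
      integral_ofReal
    rw [this, w_integral k hk one_pos]
    simp
  rwa [hval] at hlim


/-! ### Assembly of the two half-lines -/

def F (k : ℕ) (x ε s : ℝ) : ℂ :=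
  Complex.exp (-(((ε * |s| ^ k : ℝ)) : ℂ) + ((x * s : ℝ) : ℂ) * Complex.I
    + ((s ^ k : ℝ) : ℂ) * Complex.I)

lemma F_cont (x ε : ℝ) : Continuous (F k x ε) := by
  apply Complex.continuous_exp.comp
  apply Continuous.add
  apply Continuous.add
  · exact (Complex.continuous_ofReal.comp ((continuous_const.mul
      ((_root_.continuous_abs.pow k)))) ).neg
  · exact (Complex.continuous_ofReal.comp (continuous_const.mul continuous_id)).mul
      continuous_const
  · exact (Complex.continuous_ofReal.comp (continuous_pow k)).mul continuous_const

lemma norm_F (x ε s : ℝ) : ‖F k x ε s‖ = Real.exp (-(ε * |s| ^ k)) := by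
  unfold F
  rw [Complex.norm_exp]
  congr 1
  simp [← Complex.ofReal_pow]

lemma F_pos_eq (x ε : ℝ) {s : ℝ} (hs : 0 < s) :
    F k x ε s = (q k ε s : ℂ) * e k x s := by
  unfold F q e
  rw [Complex.ofReal_exp, ← Complex.exp_add, _root_.abs_of_pos hs]
  congr 1
  push_cast
  ring

lemma F_negpt_even (hk : Even k) (x ε : ℝ) {s : ℝ} (hs : 0 < s) :
    F k x ε (-s) = (q k ε s : ℂ) * e k (-x) s := by
  unfold F q e
  rw [Complex.ofReal_exp, ← Complex.exp_add, abs_neg, _root_.abs_of_pos hs,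
    hk.neg_pow]
  congr 1
  push_cast
  ring

lemma F_negpt_odd (hk : Odd k) (x ε : ℝ) {s : ℝ} (hs : 0 < s) :
    F k x ε (-s) = (starRingEnd ℂ) ((q k ε s : ℂ) * e k x s) := by
  unfold F q e
  rw [map_mul, Complex.conj_ofReal, Complex.ofReal_exp, ← Complex.exp_conj, ← Complex.exp_add,
    abs_neg, _root_.abs_of_pos hs, hk.neg_pow]
  congr 1
  rw [map_mul, Complex.conj_ofReal, Complex.conj_I]
  push_cast
  ring

lemma F_int_Ioi (hk : 2 ≤ k) (x : ℝ) {ε : ℝ} (hε : 0 < ε) :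
    IntegrableOn (F k x ε) (Ioi (0:ℝ)) volume := by
  apply Integrable.mono' (q_integrable k hk hε)
  · exact (F_cont k x ε).aestronglyMeasurable
  · filter_upwards [ae_restrict_mem measurableSet_Ioi] with s hs
    rw [norm_F, _root_.abs_of_pos hs]
    exact le_of_eq rfl

lemma F_int_Iic (hk : 2 ≤ k) (x : ℝ) {ε : ℝ} (hε : 0 < ε) :
    IntegrableOn (F k x ε) (Iic (0:ℝ)) volume := by
  have h1 : IntegrableOn (fun s => F k x ε (-s)) (Ioi (0:ℝ)) volume := by
    apply Integrable.mono' (q_integrable k hk hε)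
    · exact ((F_cont k x ε).comp continuous_neg).aestronglyMeasurable
    · filter_upwards [ae_restrict_mem measurableSet_Ioi] with s hs
      rw [norm_F, abs_neg, _root_.abs_of_pos hs]
      exact le_of_eq rfl
  rw [integrableOn_Iic_iff_integrableOn_Iio]
  have hpre : (Neg.neg ⁻¹' (Iio (0:ℝ))) = Ioi (0:ℝ) := by
    ext y; simp
  have := (MeasurePreserving.integrableOn_comp_preimage
    (Measure.measurePreserving_neg (volume : Measure ℝ))
    (Homeomorph.neg ℝ).measurableEmbedding (f := F k x ε) (s := Iio (0:ℝ)))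
  rw [hpre] at this
  exact this.1 h1

lemma split_integral (hk : 2 ≤ k) (x : ℝ) {ε : ℝ} (hε : 0 < ε) :
    ∫ s : ℝ, F k x ε s
      = (∫ s in Ioi (0:ℝ), F k x ε (-s)) + ∫ s in Ioi (0:ℝ), (q k ε s : ℂ) * e k x s := by
  rw [← intervalIntegral.integral_Iic_add_Ioi (F_int_Iic k hk x hε) (F_int_Ioi k hk x hε)]
  congr 1
  · have := integral_comp_neg_Iic (0:ℝ) (fun s => F k x ε (-s))
    simp only [neg_neg, neg_zero] at this
    rw [← this]
  · exact setIntegral_congr_fun measurableSet_Ioi (fun s hs => F_pos_eq k x ε hs)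

end Osc

open Osc in
/-- For every integer `k ≥ 2` and every real `x`, the oscillatory integral
`A_k(x) = lim_{ε→0+} ∫ exp(-ε |s|^k + i x s + i s^k) ds` exists and `|A_k(x)| ≤ 12`. -/
theorem stmt_1 (k : ℕ) (hk : 2 ≤ k) (x : ℝ) :
    ∃ A : ℂ,
      Tendsto
        (fun ε : ℝ =>
          ∫ s : ℝ, Complex.exp (-(↑(ε * |s| ^ k)) + ↑(x * s) * Complex.I + ↑(s ^ k) * Complex.I))
        (nhdsWithin 0 (Set.Ioi 0)) (nhds A) ∧
      ‖A‖ ≤ 12 := by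
  obtain ⟨Gp, hGp, hGpb⟩ := Osc.half_limit k x hk
  have hfun : (fun ε : ℝ => ∫ s : ℝ,
      Complex.exp (-(↑(ε * |s| ^ k)) + ↑(x * s) * Complex.I + ↑(s ^ k) * Complex.I))
      = fun ε => ∫ s : ℝ, Osc.F k x ε s := rfl
  rcases Nat.even_or_odd k with hpar | hpar
  · obtain ⟨Gm, hGm, hGmb⟩ := Osc.half_limit k (-x) hk
    refine ⟨Gm + Gp, ?_, ?_⟩
    · rw [hfun]
      have heq : ∀ᶠ ε in 𝓝[>] (0:ℝ),
          (∫ s in Ioi (0:ℝ), (Osc.q k ε s : ℂ) * Osc.e k (-x) s)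
            + (∫ s in Ioi (0:ℝ), (Osc.q k ε s : ℂ) * Osc.e k x s)
          = ∫ s : ℝ, Osc.F k x ε s := by
        filter_upwards [self_mem_nhdsWithin] with ε (hε : 0 < ε)
        rw [Osc.split_integral k hk x hε]
        congr 1
        exact (setIntegral_congr_fun measurableSet_Ioi
          (fun s hs => Osc.F_negpt_even k hpar x ε hs)).symm
      exact Tendsto.congr' heq (hGm.add hGp)
    · calc ‖Gm + Gp‖ ≤ ‖Gm‖ + ‖Gp‖ := norm_add_le _ _
        _ ≤ 12 := by linarith
  · refine ⟨(starRingEnd ℂ) Gp + Gp, ?_, ?_⟩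
    · rw [hfun]
      have heq : ∀ᶠ ε in 𝓝[>] (0:ℝ),
          ((starRingEnd ℂ) (∫ s in Ioi (0:ℝ), (Osc.q k ε s : ℂ) * Osc.e k x s))
            + (∫ s in Ioi (0:ℝ), (Osc.q k ε s : ℂ) * Osc.e k x s)
          = ∫ s : ℝ, Osc.F k x ε s := by
        filter_upwards [self_mem_nhdsWithin] with ε (hε : 0 < ε)
        rw [Osc.split_integral k hk x hε]
        congr 1
        rw [← integral_conj]
        exact (setIntegral_congr_fun measurableSet_Ioi
          (fun s hs => Osc.F_negpt_odd k hpar x ε hs)).symm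
      have hconj : Tendsto (fun ε : ℝ =>
          (starRingEnd ℂ) (∫ s in Ioi (0:ℝ), (Osc.q k ε s : ℂ) * Osc.e k x s))
          (𝓝[>] (0:ℝ)) (𝓝 ((starRingEnd ℂ) Gp)) :=
        (Complex.continuous_conj.tendsto Gp).comp hGp
      exact Tendsto.congr' heq (hconj.add hGp)
    · calc ‖(starRingEnd ℂ) Gp + Gp‖
          ≤ ‖(starRingEnd ℂ) Gp‖ + ‖Gp‖ := norm_add_le _ _
        _ ≤ 12 := by rw [Complex.norm_conj]; linarith
end
end
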